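/- If U is a square-free word in the letters a1, a2, a3 (i.e., U contains no factor of the form YY with Y a nonempty word), then L·U ≠ 0 in the semigroup H. -/

import Mathlib

inductive Phi
  | L | M | P | Q | R | g | s1 | s2 | t1 | t2 | t3 | a1 | a2 | a3
deriving DecidableEq

open Phi

abbrev W0 := WithZero (FreeMonoid Phi)

def w (l : List Phi) : W0 := ((FreeMonoid.ofList l : FreeMonoid Phi) : W0)

def ai : Fin 3 → Phi
  | 0 => a1 | 1 => a2 | 2 => a3

def ti : Fin 3 → Phi
  | 0 => t1 | 1 => t2 | 2 => t3

def si : Fin 2 → Phi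
  | 0 => s1 | 1 => s2

/-- `x` is one of the letters `a1, a2, a3`. -/
def isA (x : Phi) : Prop := x = a1 ∨ x = a2 ∨ x = a3

/-- The defining relations (1)–(14) of the semigroup `H`. -/
inductive rel : W0 → W0 → Prop
  | r1L (x : Phi) : rel (w [x, L]) 0
  | r1M (x : Phi) : rel (w [x, M]) 0
  | r2 : rel (w [L]) (w [M, P, g])
  | r3 (i : Fin 3) : rel (w [g, ai i]) (w [ai i, g])
  | r4 (x : Phi) (h : ¬ isA x) : rel (w [g, x]) 0
  | r5 (i j : Fin 3) : rel (w [ai i, g, ai j]) (w [ai i, R, s1, Q, ai j])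
  | r6 (i : Fin 3) (x : Phi) (h : x = R ∨ isA x) : rel (w [ti i, x]) (w [x, ti i])
  | r7 (i : Fin 3) : rel (w [P, ai i, ti i]) (w [ai i, P, s1])
  | r8 (i j : Fin 3) (h : i ≠ j) : rel (w [P, ai j, ti i]) (w [ai j, P, s2])
  | r9 (i : Fin 3) (j : Fin 2) : rel (w [si j, ai i]) (w [ai i, si j])
  | r10 : rel (w [s1, R]) (w [R, s1])
  | r11 (i : Fin 3) : rel (w [s1, Q, ai i]) (w [ti i, ai i, Q])
  | r12 : rel (w [P, R, s1]) 0
  | r13 (i : Fin 3) : rel (w [s2, R, ai i]) (w [ai i, s2, R])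
  | r14 (i : Fin 3) : rel (w [s2, R, Q, ai i]) (w [R, ti i, ai i, Q])

/-- The congruence on the free monoid with zero generated by the relations. -/
def hCon : Con W0 := conGen rel

/-- The semigroup (with zero) `H` of the paper. -/
abbrev H := hCon.Quotient

/-- The quotient map. -/
def q : W0 →* H := hCon.mk'

/-- `l` is a word in the letters `a1, a2, a3`. -/
def Aword (l : List Phi) : Prop := ∀ x ∈ l, isA x

/-- `l` is square-free: it contains no factor `Y ++ Y` with `Y` nonempty. -/
def SqFree (l : List Phi) : Prop := ∀ Y : List Phi, Y ≠ [] → ¬ (Y ++ Y) <:+: l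


namespace Stmt12
open List

def u (U : List Phi) (k : ℕ) : Phi := U.getD k Phi.a1

def seg (U : List Phi) (a b : ℕ) : List Phi := (U.drop a).take (b - a)

lemma seg_nil_of_le (U : List Phi) {a b : ℕ} (h : b ≤ a) : seg U a b = [] := by
  simp [seg, Nat.sub_eq_zero_of_le h]

lemma seg_nil_of_len (U : List Phi) {a b : ℕ} (h : U.length ≤ a) : seg U a b = [] := by
  simp [seg, List.drop_eq_nil_of_le h]

lemma seg_cons (U : List Phi) {a b : ℕ} (h1 : a < b) (h2 : a < U.length) :
    seg U a b = u U a :: seg U (a+1) b := by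
  unfold seg u
  rw [List.drop_eq_getElem_cons h2, show b - a = (b - (a+1)) + 1 by omega, List.take_succ_cons,
    List.getD_eq_getElem?_getD, List.getElem?_eq_getElem h2]
  rfl

lemma seg_append (U : List Phi) {a b c : ℕ} (h1 : a ≤ b) (h2 : b ≤ c) :
    seg U a b ++ seg U b c = seg U a c := by
  unfold seg
  rw [show c - a = (b - a) + (c - b) by omega, List.take_add]
  congr 1
  rw [List.drop_drop, show a + (b - a) = b by omega]

lemma seg_self (U : List Phi) (a : ℕ) : seg U a a = [] := seg_nil_of_le U le_rfl

lemma seg_succ (U : List Phi) {a b : ℕ} (h1 : a ≤ b) (h2 : b < U.length) :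
    seg U a (b+1) = seg U a b ++ [u U b] := by
  rw [← seg_append U h1 (Nat.le_succ b), seg_cons U (Nat.lt_succ_self b) h2, seg_self]

lemma seg_snoc (U : List Phi) {a b : ℕ} (h1 : a < b) (h2 : b ≤ U.length) :
    seg U a b = seg U a (b-1) ++ [u U (b-1)] := by
  have := seg_succ U (a := a) (b := b - 1) (by omega) (by omega)
  rw [show b - 1 + 1 = b by omega] at this
  exact this

lemma mem_seg {U : List Phi} {x : Phi} {a b : ℕ} (h : x ∈ seg U a b) : x ∈ U :=
  List.mem_of_mem_drop (List.mem_of_mem_take h)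

lemma seg_zero_len (U : List Phi) : seg U 0 U.length = U := by simp [seg]

lemma seg_ne_nil {U : List Phi} {a b : ℕ} (h : seg U a b ≠ []) : a < b ∧ a < U.length := by
  constructor
  · by_contra h'; exact h (seg_nil_of_le U (by omega))
  · by_contra h'; exact h (seg_nil_of_len U (by omega))

lemma seg_len {U : List Phi} {a b : ℕ} (h1 : a ≤ b) (h2 : b ≤ U.length) :
    (seg U a b).length = b - a := by
  simp [seg]; omega

lemma seg_sandwich (U : List Phi) {a c : ℕ} (h1 : a ≤ c) (h2 : c ≤ U.length) :
    U.take a ++ seg U a c ++ U.drop c = U := by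
  have h3 : seg U a c ++ U.drop c = U.drop a := by
    unfold seg
    rw [show U.drop c = List.drop (c - a) (U.drop a) by rw [List.drop_drop]; congr 1; omega]
    exact List.take_append_drop _ _
  rw [List.append_assoc, h3, List.take_append_drop]

lemma sq {U : List Phi} (hsf : SqFree U) {a d : ℕ} (hd : 1 ≤ d) (hle : a + 2*d ≤ U.length)
    (heq : seg U a (a+d) = seg U (a+d) (a+2*d)) : False := by
  have hY : seg U a (a+d) ≠ [] := by
    have hl := seg_len (U := U) (a := a) (b := a + d) (by omega) (by omega)
    intro hnil; rw [hnil] at hl; simp at hl; omega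
  apply hsf _ hY
  have h2 : seg U a (a+d) ++ seg U (a+d) (a+2*d) = seg U a (a+2*d) :=
    seg_append U (by omega) (by omega)
  rw [heq] at h2 ⊢
  rw [h2]
  exact ⟨U.take a, U.drop (a+2*d), seg_sandwich U (by omega) hle⟩

/-! ### admissibility predicates -/

def Safe (U : List Phi) (p r q : ℕ) : Prop :=
  ∀ j, 1 ≤ j → q + j ≤ U.length → seg U p (p+j) = seg U q (q+j) → p + j ≠ r

def Sadm (U : List Phi) (p r q : ℕ) : Prop :=
  p < r ∧ r ≤ q ∧ q ≤ U.length ∧ Safe U p r q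

def Tadm (U : List Phi) (p r q : ℕ) (i : Fin 3) : Prop :=
  p < r ∧ r ≤ q ∧ q ≤ U.length ∧
  (ai i = u U p → Sadm U (p+1) r q) ∧
  (r < q → ai i = u U (q-1) → Sadm U p r (q-1)) ∧
  (ai i ≠ u U p → p + 1 < q)

def S2adm (U : List Phi) (p m q : ℕ) : Prop :=
  p ≤ m ∧ m ≤ q ∧ q ≤ U.length ∧ p < q

lemma sadm_diag {U : List Phi} (hsf : SqFree U) {p c : ℕ} (hpc : p < c) (hc : c ≤ U.length) :
    Sadm U p c c := by
  refine ⟨hpc, le_rfl, hc, fun j hj hn heq hpj => ?_⟩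
  subst hpj
  exact sq (a := p) (d := j) hsf hj (by omega)
    (by rw [show p + 2*j = p + j + j by omega]; exact heq)

lemma sadm_shift {U : List Phi} {p r q : ℕ} (hS : Sadm U p r q) (hq : q < U.length)
    (hbase : u U p = u U q) : Sadm U (p+1) r (q+1) := by
  obtain ⟨h1, h2, h3, hSafe⟩ := hS
  have hpn : p < U.length := by omega
  have base : seg U p (p+1) = seg U q (q+1) := by
    rw [seg_cons U (Nat.lt_succ_self p) hpn, seg_cons U (Nat.lt_succ_self q) hq, hbase,
      seg_self, seg_self]
  have key : ∀ j, 1 ≤ j → q+1+j ≤ U.length → seg U (p+1) (p+1+j) = seg U (q+1) (q+1+j) →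
      p+1+j ≠ r := by
    intro j hj hn heq
    have := hSafe (j+1) (by omega) (by omega) ?_
    · omega
    · rw [show p + (j+1) = p+1+j by omega, show q + (j+1) = q+1+j by omega,
        ← seg_append U (Nat.le_succ p) (by omega), ← seg_append U (Nat.le_succ q) (by omega),
        base, heq]
  have hp1 : p + 1 ≠ r := hSafe 1 le_rfl (by omega) base
  exact ⟨by omega, by omega, by omega, key⟩

lemma sadm_unshift {U : List Phi} {p r q : ℕ} (hS : Sadm U p r q) (hp : 1 ≤ p) (hrq : r < q)
    (hbase : u U (p-1) = u U (q-1)) : Sadm U (p-1) r (q-1) := by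
  obtain ⟨h1, h2, h3, hSafe⟩ := hS
  refine ⟨by omega, by omega, by omega, fun j hj hn heq hpj => ?_⟩
  rcases Nat.eq_or_lt_of_le hj with hj1 | hj2
  · omega
  · have hpn : p - 1 < U.length := by omega
    have hqn : q - 1 < U.length := by omega
    rw [seg_cons U (by omega) hpn, seg_cons U (by omega) hqn] at heq
    have htl : seg U (p-1+1) (p-1+j) = seg U (q-1+1) (q-1+j) := by
      injection heq
    rw [show p-1+1 = p by omega, show q-1+1 = q by omega] at htl
    have := hSafe (j-1) (by omega) (by omega)
      (by rw [show p + (j-1) = p-1+j by omega, show q + (j-1) = q-1+j by omega]; exact htl)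
    omega

lemma sadm_clash {U : List Phi} {p r q : ℕ} (h1 : p < r) (h2 : r ≤ q) (h3 : q ≤ U.length)
    (hp : p < U.length) (hne : u U p ≠ u U q) : Sadm U p r q := by
  refine ⟨h1, h2, h3, fun j hj hn heq _ => ?_⟩
  rw [seg_cons U (a := p) (b := p + j) (by omega) hp,
    seg_cons U (a := q) (b := q + j) (by omega) (by omega)] at heq
  exact hne (by injection heq)

/-! ### admissible words -/

def mids (U : List Phi) (p r q : ℕ) : List Phi := seg U p r ++ R :: seg U r q

def w1 (U : List Phi) (p : ℕ) (rest : List Phi) : List Phi :=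
  M :: (seg U 0 p ++ P :: rest)

def GoodL (U : List Phi) (l : List Phi) : Prop :=
  (l = Phi.L :: U) ∨
  (∃ p c, p ≤ c ∧ c ≤ U.length ∧ l = w1 U p (seg U p c ++ g :: seg U c U.length)) ∨
  (∃ p r q A B, A ++ B = mids U p r q ∧ Sadm U p r q ∧
    l = w1 U p (A ++ s1 :: (B ++ Q :: seg U q U.length))) ∨
  (∃ p r q i A B, A ++ B = mids U p r q ∧ Tadm U p r q i ∧
    l = w1 U p (A ++ ti i :: (B ++ Q :: seg U q U.length))) ∨
  (∃ p m q A B, A ++ B = seg U p m ∧ S2adm U p m q ∧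
    l = w1 U p (A ++ s2 :: (B ++ R :: (seg U m q ++ Q :: seg U q U.length))))

/-! ### list splitting helpers -/

lemma split_unique {α : Type*} {m : α} {l₁ l₂ l₃ l₄ : List α}
    (h : l₁ ++ m :: l₂ = l₃ ++ m :: l₄) (h3 : m ∉ l₃) (h4 : m ∉ l₄) :
    l₁ = l₃ ∧ l₂ = l₄ := by
  induction l₁ generalizing l₃ with
  | nil =>
    cases l₃ with
    | nil => simpa using h
    | cons a t =>
      simp only [List.nil_append, List.cons_append, List.cons.injEq] at h
      exact absurd (h.1 ▸ (List.mem_cons_self (a := a) (l := t))) h3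
  | cons b t' ih =>
    cases l₃ with
    | nil =>
      simp only [List.nil_append, List.cons_append, List.cons.injEq] at h
      exact absurd (h.2 ▸ List.mem_append_right t' ((List.mem_cons_self (a := m) (l := l₂)))) h4
    | cons a t =>
      simp only [List.cons_append, List.cons.injEq] at h
      obtain ⟨rfl, h⟩ := h
      have := ih h (fun hm => h3 (List.mem_cons_of_mem _ hm))
      exact ⟨by rw [this.1], this.2⟩

lemma snoc_inj {α : Type*} {l₁ l₂ : List α} {a b : α} (h : l₁ ++ [a] = l₂ ++ [b]) :
    l₁ = l₂ ∧ a = b := by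
  have h' := congrArg List.reverse h
  simp only [List.reverse_append, List.reverse_cons, List.reverse_nil, List.nil_append,
    List.singleton_append, List.cons.injEq] at h'
  exact ⟨by have := congrArg List.reverse h'.2; simpa using this, h'.1⟩



/-! ### letter helpers -/

instance : DecidablePred isA := fun x => by unfold isA; infer_instance

lemma isA_ai (i : Fin 3) : isA (ai i) := by fin_cases i <;> decide

lemma isA_elim {x : Phi} (h : isA x) : ∃ i, x = ai i := by
  rcases h with h|h|h
  exacts [⟨0, h⟩, ⟨1, h⟩, ⟨2, h⟩]

lemma ai_injective : Function.Injective ai := by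
  intro i j h; fin_cases i <;> fin_cases j <;> simp_all [ai]

lemma ti_injective : Function.Injective ti := by
  intro i j h; fin_cases i <;> fin_cases j <;> simp_all [ti]

lemma notA_ti (i : Fin 3) : ¬ isA (ti i) := by fin_cases i <;> decide

lemma ti_ne (i : Fin 3) : ti i ≠ M ∧ ti i ≠ P ∧ ti i ≠ Q ∧ ti i ≠ R ∧ ti i ≠ g ∧
    ti i ≠ s1 ∧ ti i ≠ s2 ∧ ti i ≠ Phi.L := by fin_cases i <;> decide

lemma ai_ne (i : Fin 3) : ai i ≠ M ∧ ai i ≠ P ∧ ai i ≠ Q ∧ ai i ≠ R ∧ ai i ≠ g ∧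
    ai i ≠ s1 ∧ ai i ≠ s2 ∧ ai i ≠ Phi.L := by fin_cases i <;> decide

lemma not_mem_seg {U : List Phi} (hU : Aword U) {c : Phi} (hc : ¬ isA c) {a b : ℕ} :
    c ∉ seg U a b := fun h => hc (hU _ (mem_seg h))

lemma not_mem_U {U : List Phi} (hU : Aword U) {c : Phi} (hc : ¬ isA c) : c ∉ U :=
  fun h => hc (hU _ h)

lemma mem_mids {U : List Phi} (hU : Aword U) {x : Phi} {p r q : ℕ}
    (h : x ∈ mids U p r q) : x = R ∨ isA x := by
  rcases List.mem_append.mp h with h | h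
  · exact Or.inr (hU _ (mem_seg h))
  · rcases List.mem_cons.mp h with h | h
    · exact Or.inl h
    · exact Or.inr (hU _ (mem_seg h))

lemma memA_mids {U : List Phi} (hU : Aword U) {x : Phi} {p r q : ℕ} {A B : List Phi}
    (hAB : A ++ B = mids U p r q) (h : x ∈ A) : x = R ∨ isA x :=
  mem_mids hU (hAB ▸ List.mem_append_left B h)

lemma memB_mids {U : List Phi} (hU : Aword U) {x : Phi} {p r q : ℕ} {A B : List Phi}
    (hAB : A ++ B = mids U p r q) (h : x ∈ B) : x = R ∨ isA x :=
  mem_mids hU (hAB ▸ List.mem_append_right A h)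

lemma not_mem_midsA {U : List Phi} (hU : Aword U) {c : Phi} {p r q : ℕ} {A B : List Phi}
    (hAB : A ++ B = mids U p r q) (hc : ¬ isA c) (hcR : c ≠ R) : c ∉ A :=
  fun h => by rcases memA_mids hU hAB h with h' | h' <;> [exact hcR h'; exact hc h']

lemma not_mem_midsB {U : List Phi} (hU : Aword U) {c : Phi} {p r q : ℕ} {A B : List Phi}
    (hAB : A ++ B = mids U p r q) (hc : ¬ isA c) (hcR : c ≠ R) : c ∉ B :=
  fun h => by rcases memB_mids hU hAB h with h' | h' <;> [exact hcR h'; exact hc h']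

/-! ### W0 glue -/

lemma w_mul (l₁ l₂ : List Phi) : w l₁ * w l₂ = w (l₁ ++ l₂) := by
  simp [w, FreeMonoid.ofList_append]

lemma w_ne_zero (l : List Phi) : w l ≠ 0 := by
  simp [w]

lemma w_injective {l₁ l₂ : List Phi} (h : w l₁ = w l₂) : l₁ = l₂ := by
  have := WithZero.coe_inj.mp h
  simpa using congrArg FreeMonoid.toList this

lemma W0_cases (z : W0) : z = 0 ∨ ∃ l, z = w l := by
  induction z using WithZero.recZeroCoe with
  | zero => exact Or.inl rfl
  | coe f => exact Or.inr ⟨FreeMonoid.toList f, by simp [w]⟩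

/-! ### one-step rewriting and chains -/

def step (a b : W0) : Prop := ∃ (x y u v : W0), rel u v ∧ a = x * u * y ∧ b = x * v * y

lemma step_mul_left {a b : W0} (c : W0) (h : step a b) : step (c * a) (c * b) := by
  obtain ⟨x, y, u, v, hr, rfl, rfl⟩ := h
  exact ⟨c * x, y, u, v, hr, by rw [← mul_assoc, ← mul_assoc], by rw [← mul_assoc, ← mul_assoc]⟩

lemma step_mul_right {a b : W0} (c : W0) (h : step a b) : step (a * c) (b * c) := by
  obtain ⟨x, y, u, v, hr, rfl, rfl⟩ := h
  exact ⟨x, y * c, u, v, hr, by rw [mul_assoc, mul_assoc], by rw [mul_assoc, mul_assoc]⟩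

lemma eqvgen_mul_left {a b : W0} (c : W0) (h : Relation.EqvGen step a b) :
    Relation.EqvGen step (c * a) (c * b) := by
  induction h with
  | rel x y hxy => exact Relation.EqvGen.rel _ _ (step_mul_left c hxy)
  | refl x => exact Relation.EqvGen.refl _
  | symm x y _ ih => exact Relation.EqvGen.symm _ _ ih
  | trans x y z _ _ ih1 ih2 => exact Relation.EqvGen.trans _ _ _ ih1 ih2

lemma eqvgen_mul_right {a b : W0} (c : W0) (h : Relation.EqvGen step a b) :
    Relation.EqvGen step (a * c) (b * c) := by
  induction h with
  | rel x y hxy => exact Relation.EqvGen.rel _ _ (step_mul_right c hxy)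
  | refl x => exact Relation.EqvGen.refl _
  | symm x y _ ih => exact Relation.EqvGen.symm _ _ ih
  | trans x y z _ _ ih1 ih2 => exact Relation.EqvGen.trans _ _ _ ih1 ih2

def stepCon : Con W0 where
  r := Relation.EqvGen step
  iseqv := Relation.EqvGen.is_equivalence step
  mul' := fun {w x y z} h1 h2 =>
    Relation.EqvGen.trans _ _ _ (eqvgen_mul_right y h1) (eqvgen_mul_left x h2)

lemma chain_of_hCon {a b : W0} (h : hCon a b) : Relation.EqvGen step a b := by
  have hle : hCon ≤ stepCon := by
    unfold hCon
    exact Con.conGen_le.mpr (fun x y hxy =>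
      Relation.EqvGen.rel x y ⟨1, 1, x, y, hxy, by simp, by simp⟩)
  exact hle h

/-! ### the invariant set -/

def GoodW (U : List Phi) (z : W0) : Prop := ∃ l, GoodL U l ∧ z = w l

lemma goodW_coe {U l} : GoodW U (w l) ↔ GoodL U l := by
  constructor
  · rintro ⟨l', h, he⟩
    rwa [w_injective he]
  · intro h; exact ⟨l, h, rfl⟩

lemma not_goodW_zero {U} : ¬ GoodW U 0 := by
  rintro ⟨l, _, he⟩
  exact w_ne_zero l he.symm

/-! ### closure case lemmas -/

section Closure

variable {U : List Phi}


lemma notmem_app {c : Phi} {l₁ l₂ : List Phi} (h₁ : c ∉ l₁) (h₂ : c ∉ l₂) : c ∉ l₁ ++ l₂ :=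
  fun h => by rcases List.mem_append.mp h with h | h <;> [exact h₁ h; exact h₂ h]

lemma notmem_cons {c a : Phi} {l : List Phi} (h1 : c ≠ a) (h2 : c ∉ l) : c ∉ a :: l :=
  fun h => by rcases List.mem_cons.mp h with h | h <;> [exact h1 h; exact h2 h]

lemma mem_w1_elim {U : List Phi} {p : ℕ} {rest : List Phi} {c : Phi} (h : c ∈ w1 U p rest) :
    c = M ∨ c ∈ seg U 0 p ∨ c = P ∨ c ∈ rest := by
  simp only [w1, List.mem_cons, List.mem_append] at h
  tauto

lemma no_c0 {U : List Phi} (hU : Aword U) {c : Phi} (h1 : c ≠ Phi.L) (h2 : ¬ isA c) :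
    c ∉ Phi.L :: U :=
  notmem_cons h1 (not_mem_U hU h2)

lemma no_cg {U : List Phi} (hU : Aword U) {c : Phi} {p cc : ℕ}
    (h1 : c ≠ M) (h2 : c ≠ P) (h3 : c ≠ g) (h4 : ¬ isA c) :
    c ∉ w1 U p (seg U p cc ++ g :: seg U cc U.length) := by
  intro h
  rcases mem_w1_elim h with h | h | h | h
  · exact h1 h
  · exact h4 (hU _ (mem_seg h))
  · exact h2 h
  · rcases List.mem_append.mp h with h | h
    · exact h4 (hU _ (mem_seg h))
    · rcases List.mem_cons.mp h with h | h
      · exact h3 h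
      · exact h4 (hU _ (mem_seg h))

lemma no_cs1 {U : List Phi} (hU : Aword U) {c : Phi} {p r q : ℕ} {A B : List Phi}
    (hAB : A ++ B = mids U p r q)
    (h1 : c ≠ M) (h2 : c ≠ P) (h3 : c ≠ s1) (h4 : c ≠ Q) (h5 : c ≠ R) (h6 : ¬ isA c) :
    c ∉ w1 U p (A ++ s1 :: (B ++ Q :: seg U q U.length)) := by
  intro h
  rcases mem_w1_elim h with h | h | h | h
  · exact h1 h
  · exact h6 (hU _ (mem_seg h))
  · exact h2 h
  · rcases List.mem_append.mp h with h | h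
    · exact (not_mem_midsA hU hAB h6 h5) h
    · rcases List.mem_cons.mp h with h | h
      · exact h3 h
      · rcases List.mem_append.mp h with h | h
        · exact (not_mem_midsB hU hAB h6 h5) h
        · rcases List.mem_cons.mp h with h | h
          · exact h4 h
          · exact h6 (hU _ (mem_seg h))

lemma no_ct {U : List Phi} (hU : Aword U) {c : Phi} {p r q : ℕ} {i : Fin 3} {A B : List Phi}
    (hAB : A ++ B = mids U p r q)
    (h1 : c ≠ M) (h2 : c ≠ P) (h3 : c ≠ ti i) (h4 : c ≠ Q) (h5 : c ≠ R) (h6 : ¬ isA c) :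
    c ∉ w1 U p (A ++ ti i :: (B ++ Q :: seg U q U.length)) := by
  intro h
  rcases mem_w1_elim h with h | h | h | h
  · exact h1 h
  · exact h6 (hU _ (mem_seg h))
  · exact h2 h
  · rcases List.mem_append.mp h with h | h
    · exact (not_mem_midsA hU hAB h6 h5) h
    · rcases List.mem_cons.mp h with h | h
      · exact h3 h
      · rcases List.mem_append.mp h with h | h
        · exact (not_mem_midsB hU hAB h6 h5) h
        · rcases List.mem_cons.mp h with h | h
          · exact h4 h
          · exact h6 (hU _ (mem_seg h))

lemma no_cs2 {U : List Phi} (hU : Aword U) {c : Phi} {p m q : ℕ} {A B : List Phi}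
    (hAB : A ++ B = seg U p m)
    (h1 : c ≠ M) (h2 : c ≠ P) (h3 : c ≠ s2) (h4 : c ≠ Q) (h5 : c ≠ R) (h6 : ¬ isA c) :
    c ∉ w1 U p (A ++ s2 :: (B ++ R :: (seg U m q ++ Q :: seg U q U.length))) := by
  have hA : c ∉ A := fun h => h6 (hU _ (mem_seg (hAB ▸ List.mem_append_left B h)))
  have hB : c ∉ B := fun h => h6 (hU _ (mem_seg (hAB ▸ List.mem_append_right A h)))
  intro h
  rcases mem_w1_elim h with h | h | h | h
  · exact h1 h
  · exact h6 (hU _ (mem_seg h))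
  · exact h2 h
  · rcases List.mem_append.mp h with h | h
    · exact hA h
    · rcases List.mem_cons.mp h with h | h
      · exact h3 h
      · rcases List.mem_append.mp h with h | h
        · exact hB h
        · rcases List.mem_cons.mp h with h | h
          · exact h5 h
          · rcases List.mem_append.mp h with h | h
            · exact h6 (hU _ (mem_seg h))
            · rcases List.mem_cons.mp h with h | h
              · exact h4 h
              · exact h6 (hU _ (mem_seg h))

lemma no_r1M_aux (hU : Aword U) {p : ℕ} {rest : List Phi} (hrest : M ∉ rest)
    {xl yl : List Phi} {x : Phi} (hl : xl ++ [x, M] ++ yl = w1 U p rest) : False := by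
  have key : M ∉ seg U 0 p ++ P :: rest := by
    exact notmem_app (not_mem_seg hU (by decide)) (notmem_cons (by decide) hrest)
  unfold w1 at hl
  cases xl with
  | nil =>
    simp only [List.nil_append, List.cons_append, List.cons.injEq] at hl
    exact key (hl.2 ▸ (List.mem_cons_self (a := M) (l := yl)))
  | cons a xl' =>
    simp only [List.cons_append, List.cons.injEq] at hl
    exact key (hl.2 ▸ (by simp : M ∈ xl' ++ [x, M] ++ yl))

lemma no_r1M (hU : Aword U) (x : Phi) (xl yl : List Phi) :
    ¬ GoodL U (xl ++ [x, M] ++ yl) := by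
  rintro (hl | ⟨p,c,hpc,hcn,hl⟩ | ⟨p,r,qq,A,B,hAB,hS,hl⟩ | ⟨p,r,qq,i',A,B,hAB,hT,hl⟩ |
    ⟨p,m,qq,A,B,hAB,hS2,hl⟩)
  · exact no_c0 hU (by decide) (by decide) (hl ▸ (by simp : M ∈ xl ++ [x, M] ++ yl))
  · exact no_r1M_aux hU (notmem_app (not_mem_seg hU (by decide))
      (notmem_cons (by decide) (not_mem_seg hU (by decide)))) hl
  · exact no_r1M_aux hU (notmem_app (not_mem_midsA hU hAB (by decide) (by decide))
      (notmem_cons (by decide) (notmem_app (not_mem_midsB hU hAB (by decide) (by decide))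
        (notmem_cons (by decide) (not_mem_seg hU (by decide)))))) hl
  · exact no_r1M_aux hU (notmem_app (not_mem_midsA hU hAB (by decide) (by decide))
      (notmem_cons (Ne.symm (ti_ne i').1) (notmem_app (not_mem_midsB hU hAB (by decide) (by decide))
        (notmem_cons (by decide) (not_mem_seg hU (by decide)))))) hl
  · have hA : M ∉ A := fun h => (by decide : ¬ isA M) (hU _ (mem_seg (hAB ▸ List.mem_append_left B h)))
    have hB : M ∉ B := fun h => (by decide : ¬ isA M) (hU _ (mem_seg (hAB ▸ List.mem_append_right A h)))
    exact no_r1M_aux hU (notmem_app hA (notmem_cons (by decide) (notmem_app hB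
      (notmem_cons (by decide) (notmem_app (not_mem_seg hU (by decide))
        (notmem_cons (by decide) (not_mem_seg hU (by decide)))))))) hl

lemma g_notin_X (hU : Aword U) {p c : ℕ} : g ∉ M :: (seg U 0 p ++ P :: seg U p c) :=
  notmem_cons (by decide) (notmem_app (not_mem_seg hU (by decide))
    (notmem_cons (by decide) (not_mem_seg hU (by decide))))

lemma P_notin_head (hU : Aword U) {p : ℕ} : P ∉ M :: seg U 0 p :=
  notmem_cons (by decide) (not_mem_seg hU (by decide))

lemma w1_eq_g (U : List Phi) (p c : ℕ) :
    w1 U p (seg U p c ++ g :: seg U c U.length) =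
      (M :: (seg U 0 p ++ P :: seg U p c)) ++ g :: seg U c U.length := by
  simp [w1]

lemma no_r4 (hU : Aword U) (x : Phi) (hx : ¬ isA x) (xl yl : List Phi) :
    ¬ GoodL U (xl ++ [g, x] ++ yl) := by
  rintro (hl | ⟨p,c,hpc,hcn,hl⟩ | ⟨p,r,qq,A,B,hAB,hS,hl⟩ | ⟨p,r,qq,i',A,B,hAB,hT,hl⟩ |
    ⟨p,m,qq,A,B,hAB,hS2,hl⟩)
  · exact no_c0 hU (by decide) (by decide) (hl ▸ (by simp : g ∈ xl ++ [g, x] ++ yl))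
  · rw [w1_eq_g, show xl ++ [g, x] ++ yl = xl ++ g :: (x :: yl) by simp] at hl
    obtain ⟨h1, h2⟩ := split_unique hl (g_notin_X hU) (not_mem_seg hU (by decide))
    exact hx (hU _ (mem_seg (h2 ▸ (List.mem_cons_self (a := x) (l := yl)))))
  · exact no_cs1 hU hAB (by decide) (by decide) (by decide) (by decide) (by decide) (by decide)
      (hl ▸ (by simp : g ∈ xl ++ [g, x] ++ yl))
  · exact no_ct hU hAB (by decide) (by decide) (Ne.symm (ti_ne i').2.2.2.2.1) (by decide)
      (by decide) (by decide) (hl ▸ (by simp : g ∈ xl ++ [g, x] ++ yl))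
  · exact no_cs2 hU hAB (by decide) (by decide) (by decide) (by decide) (by decide) (by decide)
      (hl ▸ (by simp : g ∈ xl ++ [g, x] ++ yl))

lemma u_isA {U : List Phi} (hU : Aword U) {k : ℕ} (hk : k < U.length) : isA (u U k) :=
  hU _ (mem_seg (show u U k ∈ seg U k (k+1) by
    rw [seg_cons U (Nat.lt_succ_self k) hk]; exact (List.mem_cons_self (a := _) (l := _))))

lemma w1_eq_tok (U : List Phi) (p : ℕ) (A : List Phi) (tok : Phi) (rest : List Phi) :
    w1 U p (A ++ tok :: rest) = (M :: (seg U 0 p ++ P :: A)) ++ tok :: rest := by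
  simp [w1]

lemma tok_notin_X {U : List Phi} (hU : Aword U) {tok : Phi} {p r q : ℕ} {A B : List Phi}
    (hAB : A ++ B = mids U p r q) (h1 : tok ≠ M) (h2 : tok ≠ P) (h5 : tok ≠ R)
    (h6 : ¬ isA tok) : tok ∉ M :: (seg U 0 p ++ P :: A) :=
  notmem_cons h1 (notmem_app (not_mem_seg hU h6)
    (notmem_cons h2 (not_mem_midsA hU hAB h6 h5)))

lemma tok_notin_Y {U : List Phi} (hU : Aword U) {tok : Phi} {p r q : ℕ} {A B : List Phi}
    (hAB : A ++ B = mids U p r q) (h4 : tok ≠ Q) (h5 : tok ≠ R) (h6 : ¬ isA tok) :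
    tok ∉ B ++ Q :: seg U q U.length :=
  notmem_app (not_mem_midsB hU hAB h6 h5) (notmem_cons h4 (not_mem_seg hU h6))

lemma tok_notin_X2 {U : List Phi} (hU : Aword U) {tok : Phi} {p m : ℕ} {A B : List Phi}
    (hAB : A ++ B = seg U p m) (h1 : tok ≠ M) (h2 : tok ≠ P) (h6 : ¬ isA tok) :
    tok ∉ M :: (seg U 0 p ++ P :: A) :=
  notmem_cons h1 (notmem_app (not_mem_seg hU h6) (notmem_cons h2
    (fun h => h6 (hU _ (mem_seg (hAB ▸ List.mem_append_left B h))))))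

lemma tok_notin_Y2 {U : List Phi} (hU : Aword U) {tok : Phi} {p m q : ℕ} {A B : List Phi}
    (hAB : A ++ B = seg U p m) (h4 : tok ≠ Q) (h5 : tok ≠ R) (h6 : ¬ isA tok) :
    tok ∉ B ++ R :: (seg U m q ++ Q :: seg U q U.length) :=
  notmem_app (fun h => h6 (hU _ (mem_seg (hAB ▸ List.mem_append_right A h))))
    (notmem_cons h5 (notmem_app (not_mem_seg hU h6)
      (notmem_cons h4 (not_mem_seg hU h6))))

lemma no_r1L (hU : Aword U) (x : Phi) (xl yl : List Phi) :
    ¬ GoodL U (xl ++ [x, Phi.L] ++ yl) := by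
  rintro (hl | ⟨p,c,hpc,hcn,hl⟩ | ⟨p,r,qq,A,B,hAB,hS,hl⟩ | ⟨p,r,qq,i',A,B,hAB,hT,hl⟩ |
    ⟨p,m,qq,A,B,hAB,hS2,hl⟩)
  · cases xl with
    | nil =>
      simp only [List.nil_append, List.cons_append, List.cons.injEq] at hl
      have hm : Phi.L ∈ U := hl.2 ▸ (List.mem_cons_self (a := _) (l := _))
      exact not_mem_U hU (by decide) hm
    | cons a xl' =>
      simp only [List.cons_append, List.cons.injEq] at hl
      exact not_mem_U hU (by decide)
        (hl.2 ▸ (by simp : Phi.L ∈ xl' ++ [x, Phi.L] ++ yl))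
  · exact no_cg hU (by decide) (by decide) (by decide) (by decide)
      (hl ▸ (by simp : Phi.L ∈ xl ++ [x, Phi.L] ++ yl))
  · exact no_cs1 hU hAB (by decide) (by decide) (by decide) (by decide) (by decide) (by decide)
      (hl ▸ (by simp : Phi.L ∈ xl ++ [x, Phi.L] ++ yl))
  · exact no_ct hU hAB (by decide) (by decide) (Ne.symm (ti_ne i').2.2.2.2.2.2.2) (by decide)
      (by decide) (by decide) (hl ▸ (by simp : Phi.L ∈ xl ++ [x, Phi.L] ++ yl))
  · exact no_cs2 hU hAB (by decide) (by decide) (by decide) (by decide) (by decide) (by decide)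
      (hl ▸ (by simp : Phi.L ∈ xl ++ [x, Phi.L] ++ yl))

lemma no_r12 (hU : Aword U) (xl yl : List Phi) :
    ¬ GoodL U (xl ++ [P, R, s1] ++ yl) := by
  rintro (hl | ⟨p,c,hpc,hcn,hl⟩ | ⟨p,r,qq,A,B,hAB,hS,hl⟩ | ⟨p,r,qq,i',A,B,hAB,hT,hl⟩ |
    ⟨p,m,qq,A,B,hAB,hS2,hl⟩)
  · exact absurd (hl ▸ (by simp : s1 ∈ xl ++ [P, R, s1] ++ yl))
      (no_c0 hU (by decide) (by decide))
  · exact absurd (hl ▸ (by simp : s1 ∈ xl ++ [P, R, s1] ++ yl))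
      (no_cg hU (by decide) (by decide) (by decide) (by decide))
  · rw [w1_eq_tok, show xl ++ [P, R, s1] ++ yl = (xl ++ [P, R]) ++ s1 :: yl by simp] at hl
    obtain ⟨h1, h2⟩ := split_unique hl
      (notmem_cons (by decide) (notmem_app (not_mem_seg hU (by decide))
        (notmem_cons (by decide) (not_mem_midsA hU hAB (by decide) (by decide)))))
      (notmem_app (not_mem_midsB hU hAB (by decide) (by decide))
        (notmem_cons (by decide) (not_mem_seg hU (by decide))))
    rcases List.eq_nil_or_concat A with rfl | ⟨A'', lastA, rfl⟩
    · rw [show M :: (seg U 0 p ++ P :: ([] : List Phi)) = (M :: seg U 0 p) ++ [P] by simp,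
        show xl ++ [P, R] = (xl ++ [P]) ++ [R] by simp] at h1
      obtain ⟨-, hPR⟩ := snoc_inj h1
      exact absurd hPR (by decide)
    · rw [List.concat_eq_append] at h1 hAB
      rw [show xl ++ [P, R] = (xl ++ [P]) ++ [R] by simp,
        show M :: (seg U 0 p ++ P :: (A'' ++ [lastA])) =
          (M :: (seg U 0 p ++ P :: A'')) ++ [lastA] by simp] at h1
      obtain ⟨h3, h4⟩ := snoc_inj h1
      rw [show xl ++ [P] = xl ++ P :: ([] : List Phi) by simp,
        show M :: (seg U 0 p ++ P :: A'') = (M :: seg U 0 p) ++ P :: A'' by simp] at h3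
      obtain ⟨h5, h6⟩ := split_unique h3 (P_notin_head hU)
        (fun hm => (not_mem_midsA hU hAB (by decide) (by decide))
          (List.mem_append_left [lastA] hm))
      obtain ⟨hpr, hrq, hql, -⟩ := hS
      have hpl : p < U.length := by omega
      rw [← h6, ← h4] at hAB
      unfold mids at hAB
      rw [seg_cons U hpr hpl] at hAB
      simp only [List.nil_append, List.cons_append, List.cons.injEq] at hAB
      have hR : isA R := by rw [hAB.1]; exact u_isA hU hpl
      exact absurd hR (by decide)
  · exact absurd (hl ▸ (by simp : s1 ∈ xl ++ [P, R, s1] ++ yl))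
      (no_ct hU hAB (by decide) (by decide) (Ne.symm (ti_ne i').2.2.2.2.2.1) (by decide)
        (by decide) (by decide))
  · exact absurd (hl ▸ (by simp : s1 ∈ xl ++ [P, R, s1] ++ yl))
      (no_cs2 hU hAB (by decide) (by decide) (by decide) (by decide) (by decide) (by decide))

lemma iff_r2 (hU : Aword U) (xl yl : List Phi) :
    GoodL U (xl ++ [Phi.L] ++ yl) ↔ GoodL U (xl ++ [M, P, g] ++ yl) := by
  constructor
  · rintro (hl | ⟨p,c,hpc,hcn,hl⟩ | ⟨p,r,qq,A,B,hAB,hS,hl⟩ | ⟨p,r,qq,i',A,B,hAB,hT,hl⟩ |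
      ⟨p,m,qq,A,B,hAB,hS2,hl⟩)
    · rw [show xl ++ [Phi.L] ++ yl = xl ++ Phi.L :: yl by simp,
        show Phi.L :: U = ([] : List Phi) ++ Phi.L :: U by simp] at hl
      obtain ⟨h1, h2⟩ := split_unique hl (by simp) (not_mem_U hU (by decide))
      refine Or.inr (Or.inl ⟨0, 0, le_rfl, Nat.zero_le _, ?_⟩)
      subst h1 h2
      simp [w1, seg_self, seg_zero_len]
    · exact absurd (hl ▸ (by simp : Phi.L ∈ xl ++ [Phi.L] ++ yl))
        (no_cg hU (by decide) (by decide) (by decide) (by decide))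
    · exact absurd (hl ▸ (by simp : Phi.L ∈ xl ++ [Phi.L] ++ yl))
        (no_cs1 hU hAB (by decide) (by decide) (by decide) (by decide) (by decide) (by decide))
    · exact absurd (hl ▸ (by simp : Phi.L ∈ xl ++ [Phi.L] ++ yl))
        (no_ct hU hAB (by decide) (by decide) (Ne.symm (ti_ne i').2.2.2.2.2.2.2) (by decide)
          (by decide) (by decide))
    · exact absurd (hl ▸ (by simp : Phi.L ∈ xl ++ [Phi.L] ++ yl))
        (no_cs2 hU hAB (by decide) (by decide) (by decide) (by decide) (by decide) (by decide))
  · rintro (hl | ⟨p,c,hpc,hcn,hl⟩ | ⟨p,r,qq,A,B,hAB,hS,hl⟩ | ⟨p,r,qq,i',A,B,hAB,hT,hl⟩ |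
      ⟨p,m,qq,A,B,hAB,hS2,hl⟩)
    · exact absurd (hl ▸ (by simp : M ∈ xl ++ [M, P, g] ++ yl))
        (no_c0 hU (by decide) (by decide))
    · rw [w1_eq_g, show xl ++ [M, P, g] ++ yl = (xl ++ [M, P]) ++ g :: yl by simp] at hl
      obtain ⟨h1, h2⟩ := split_unique hl (g_notin_X hU) (not_mem_seg hU (by decide))
      rw [show xl ++ [M, P] = (xl ++ [M]) ++ P :: ([] : List Phi) by simp,
        show M :: (seg U 0 p ++ P :: seg U p c) = (M :: seg U 0 p) ++ P :: seg U p c by simp] at h1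
      obtain ⟨h3, h4⟩ := split_unique h1 (P_notin_head hU) (not_mem_seg hU (by decide))
      rw [show xl ++ [M] = xl ++ M :: ([] : List Phi) by simp,
        show M :: seg U 0 p = ([] : List Phi) ++ M :: seg U 0 p by simp] at h3
      obtain ⟨h5, h6⟩ := split_unique h3 (by simp) (not_mem_seg hU (by decide))
      left
      have e1 : seg U 0 p ++ seg U p c = seg U 0 c := seg_append U (Nat.zero_le p) hpc
      rw [← h6, ← h4] at e1
      have e2 : seg U 0 c ++ seg U c U.length = seg U 0 U.length :=
        seg_append U (Nat.zero_le c) hcn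
      rw [← e1] at e2
      subst h5 h2
      simp only [List.nil_append, List.append_assoc] at e2 ⊢
      rw [seg_zero_len] at e2
      rw [e2]; rfl
    · exact absurd (hl ▸ (by simp : g ∈ xl ++ [M, P, g] ++ yl))
        (no_cs1 hU hAB (by decide) (by decide) (by decide) (by decide) (by decide) (by decide))
    · exact absurd (hl ▸ (by simp : g ∈ xl ++ [M, P, g] ++ yl))
        (no_ct hU hAB (by decide) (by decide) (Ne.symm (ti_ne i').2.2.2.2.1) (by decide)
          (by decide) (by decide))
    · exact absurd (hl ▸ (by simp : g ∈ xl ++ [M, P, g] ++ yl))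
        (no_cs2 hU hAB (by decide) (by decide) (by decide) (by decide) (by decide) (by decide))

lemma iff_r3 (hU : Aword U) (i : Fin 3) (xl yl : List Phi) :
    GoodL U (xl ++ [g, ai i] ++ yl) ↔ GoodL U (xl ++ [ai i, g] ++ yl) := by
  constructor
  · rintro (hl | ⟨p,c,hpc,hcn,hl⟩ | ⟨p,r,qq,A,B,hAB,hS,hl⟩ | ⟨p,r,qq,i',A,B,hAB,hT,hl⟩ |
      ⟨p,m,qq,A,B,hAB,hS2,hl⟩)
    · exact absurd (hl ▸ (by simp : g ∈ xl ++ [g, ai i] ++ yl))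
        (no_c0 hU (by decide) (by decide))
    · rw [w1_eq_g, show xl ++ [g, ai i] ++ yl = xl ++ g :: (ai i :: yl) by simp] at hl
      obtain ⟨h1, h2⟩ := split_unique hl (g_notin_X hU) (not_mem_seg hU (by decide))
      have hne : seg U c U.length ≠ [] := by rw [← h2]; simp
      obtain ⟨hcl1, hcl2⟩ := seg_ne_nil hne
      rw [seg_cons U hcl1 hcl2] at h2
      injection h2 with h2a h2b
      refine Or.inr (Or.inl ⟨p, c+1, by omega, by omega, ?_⟩)
      subst h1 h2b
      rw [seg_succ U hpc hcl2]
      simp only [w1, List.append_assoc, List.cons_append, List.singleton_append,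
        List.nil_append]
      rw [← h2a]
    · exact absurd (hl ▸ (by simp : g ∈ xl ++ [g, ai i] ++ yl))
        (no_cs1 hU hAB (by decide) (by decide) (by decide) (by decide) (by decide) (by decide))
    · exact absurd (hl ▸ (by simp : g ∈ xl ++ [g, ai i] ++ yl))
        (no_ct hU hAB (by decide) (by decide) (Ne.symm (ti_ne i').2.2.2.2.1) (by decide)
          (by decide) (by decide))
    · exact absurd (hl ▸ (by simp : g ∈ xl ++ [g, ai i] ++ yl))
        (no_cs2 hU hAB (by decide) (by decide) (by decide) (by decide) (by decide) (by decide))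
  · rintro (hl | ⟨p,c,hpc,hcn,hl⟩ | ⟨p,r,qq,A,B,hAB,hS,hl⟩ | ⟨p,r,qq,i',A,B,hAB,hT,hl⟩ |
      ⟨p,m,qq,A,B,hAB,hS2,hl⟩)
    · exact absurd (hl ▸ (by simp : g ∈ xl ++ [ai i, g] ++ yl))
        (no_c0 hU (by decide) (by decide))
    · rw [w1_eq_g, show xl ++ [ai i, g] ++ yl = (xl ++ [ai i]) ++ g :: yl by simp] at hl
      obtain ⟨h1, h2⟩ := split_unique hl (g_notin_X hU) (not_mem_seg hU (by decide))
      by_cases hnil : seg U p c = []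
      · rw [hnil, show M :: (seg U 0 p ++ P :: ([] : List Phi)) = (M :: seg U 0 p) ++ [P] by simp]
          at h1
        obtain ⟨-, hPai⟩ := snoc_inj h1
        exact absurd hPai ((ai_ne i).2.1)
      · obtain ⟨hpc', hpl⟩ := seg_ne_nil hnil
        rw [seg_snoc U hpc' hcn,
          show M :: (seg U 0 p ++ P :: (seg U p (c-1) ++ [u U (c-1)])) =
            (M :: (seg U 0 p ++ P :: seg U p (c-1))) ++ [u U (c-1)] by simp] at h1
        obtain ⟨h3, h4⟩ := snoc_inj h1
        refine Or.inr (Or.inl ⟨p, c-1, by omega, by omega, ?_⟩)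
        subst h3 h2
        have hseg : seg U (c-1) U.length = u U (c-1) :: seg U c U.length := by
          rw [seg_cons U (a := c-1) (b := U.length) (by omega) (by omega),
            show c - 1 + 1 = c by omega]
        rw [hseg]
        simp only [w1, List.append_assoc, List.cons_append, List.singleton_append,
          List.nil_append]
        rw [← h4]
    · exact absurd (hl ▸ (by simp : g ∈ xl ++ [ai i, g] ++ yl))
        (no_cs1 hU hAB (by decide) (by decide) (by decide) (by decide) (by decide) (by decide))
    · exact absurd (hl ▸ (by simp : g ∈ xl ++ [ai i, g] ++ yl))
        (no_ct hU hAB (by decide) (by decide) (Ne.symm (ti_ne i').2.2.2.2.1) (by decide)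
          (by decide) (by decide))
    · exact absurd (hl ▸ (by simp : g ∈ xl ++ [ai i, g] ++ yl))
        (no_cs2 hU hAB (by decide) (by decide) (by decide) (by decide) (by decide) (by decide))

lemma iff_r5 (hU : Aword U) (hsf : SqFree U) (i j : Fin 3) (xl yl : List Phi) :
    GoodL U (xl ++ [ai i, g, ai j] ++ yl) ↔
      GoodL U (xl ++ [ai i, R, s1, Q, ai j] ++ yl) := by
  constructor
  · rintro (hl | ⟨p,c,hpc,hcn,hl⟩ | ⟨p,r,qq,A,B,hAB,hS,hl⟩ | ⟨p,r,qq,i',A,B,hAB,hT,hl⟩ |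
      ⟨p,m,qq,A,B,hAB,hS2,hl⟩)
    · exact absurd (hl ▸ (by simp : g ∈ xl ++ [ai i, g, ai j] ++ yl))
        (no_c0 hU (by decide) (by decide))
    · rw [w1_eq_g,
        show xl ++ [ai i, g, ai j] ++ yl = (xl ++ [ai i]) ++ g :: ([ai j] ++ yl) by simp] at hl
      obtain ⟨h1, h2⟩ := split_unique hl (g_notin_X hU) (not_mem_seg hU (by decide))
      have hne : seg U c U.length ≠ [] := by rw [← h2]; simp
      obtain ⟨hcl1, hcl2⟩ := seg_ne_nil hne
      rw [seg_cons U hcl1 hcl2] at h2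
      simp only [List.cons_append, List.nil_append] at h2
      injection h2 with h2a h2b
      by_cases hnil : seg U p c = []
      · rw [hnil, show M :: (seg U 0 p ++ P :: ([] : List Phi)) = (M :: seg U 0 p) ++ [P] by simp]
          at h1
        obtain ⟨-, hPai⟩ := snoc_inj h1
        exact absurd hPai ((ai_ne i).2.1)
      · obtain ⟨hpc', hplen⟩ := seg_ne_nil hnil
        rw [seg_snoc U hpc' hcn,
          show M :: (seg U 0 p ++ P :: (seg U p (c-1) ++ [u U (c-1)])) =
            (M :: (seg U 0 p ++ P :: seg U p (c-1))) ++ [u U (c-1)] by simp] at h1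
        obtain ⟨h3, h4⟩ := snoc_inj h1
        subst h3 h2b
        refine Or.inr (Or.inr (Or.inl ⟨p, c, c, seg U p c ++ [R], [], ?_,
          sadm_diag hsf hpc' hcn, ?_⟩))
        · unfold mids; rw [seg_self]; simp
        · rw [seg_snoc U hpc' hcn, seg_cons U hcl1 hcl2]
          simp only [w1, List.append_assoc, List.cons_append, List.singleton_append,
            List.nil_append]
          rw [← h4, ← h2a]
    · exact absurd (hl ▸ (by simp : g ∈ xl ++ [ai i, g, ai j] ++ yl))
        (no_cs1 hU hAB (by decide) (by decide) (by decide) (by decide) (by decide) (by decide))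
    · exact absurd (hl ▸ (by simp : g ∈ xl ++ [ai i, g, ai j] ++ yl))
        (no_ct hU hAB (by decide) (by decide) (Ne.symm (ti_ne i').2.2.2.2.1) (by decide)
          (by decide) (by decide))
    · exact absurd (hl ▸ (by simp : g ∈ xl ++ [ai i, g, ai j] ++ yl))
        (no_cs2 hU hAB (by decide) (by decide) (by decide) (by decide) (by decide) (by decide))
  · rintro (hl | ⟨p,c,hpc,hcn,hl⟩ | ⟨p,r,qq,A,B,hAB,hS,hl⟩ | ⟨p,r,qq,i',A,B,hAB,hT,hl⟩ |
      ⟨p,m,qq,A,B,hAB,hS2,hl⟩)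
    · exact absurd (hl ▸ (by simp : s1 ∈ xl ++ [ai i, R, s1, Q, ai j] ++ yl))
        (no_c0 hU (by decide) (by decide))
    · exact absurd (hl ▸ (by simp : s1 ∈ xl ++ [ai i, R, s1, Q, ai j] ++ yl))
        (no_cg hU (by decide) (by decide) (by decide) (by decide))
    · rw [w1_eq_tok, show xl ++ [ai i, R, s1, Q, ai j] ++ yl =
        (xl ++ [ai i, R]) ++ s1 :: ([Q, ai j] ++ yl) by simp] at hl
      obtain ⟨h1, h2⟩ := split_unique hl
        (tok_notin_X hU hAB (by decide) (by decide) (by decide) (by decide))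
        (tok_notin_Y hU hAB (by decide) (by decide) (by decide))
      cases B with
      | cons b B' =>
        simp only [List.cons_append, List.cons.injEq] at h2
        have hbQ : b = Q := h2.1.symm
        subst hbQ
        rcases memB_mids hU hAB ((List.mem_cons_self (a := _) (l := B'))) with h | h
        · exact absurd h (by decide)
        · exact absurd h (by decide)
      | nil =>
        simp only [List.nil_append, List.cons_append, List.cons.injEq] at h2
        obtain ⟨-, h2⟩ := h2
        have hne : seg U qq U.length ≠ [] := by rw [← h2]; simp
        obtain ⟨hql1, hql2⟩ := seg_ne_nil hne
        rw [seg_cons U hql1 hql2] at h2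
        injection h2 with h2a h2b
        rw [List.append_nil] at hAB
        subst hAB
        obtain ⟨hpr, hrq, hql, -⟩ := hS
        have hplen : p < U.length := by omega
        by_cases hrq2 : r = qq
        · subst hrq2
          rw [show mids U p r r = seg U p r ++ [R] by unfold mids; rw [seg_self],
            show M :: (seg U 0 p ++ P :: (seg U p r ++ [R])) =
              (M :: (seg U 0 p ++ P :: seg U p r)) ++ [R] by simp,
            show xl ++ [ai i, R] = (xl ++ [ai i]) ++ [R] by simp] at h1
          obtain ⟨h3, -⟩ := snoc_inj h1
          have hnil2 : seg U p r ≠ [] := by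
            intro hh
            rw [hh, show M :: (seg U 0 p ++ P :: ([] : List Phi)) = (M :: seg U 0 p) ++ [P]
              by simp] at h3
            obtain ⟨-, hPai⟩ := snoc_inj h3
            exact absurd hPai ((ai_ne i).2.1)
          rw [seg_snoc U hpr hql,
            show M :: (seg U 0 p ++ P :: (seg U p (r-1) ++ [u U (r-1)])) =
              (M :: (seg U 0 p ++ P :: seg U p (r-1))) ++ [u U (r-1)] by simp] at h3
          obtain ⟨h5, h4⟩ := snoc_inj h3
          subst h5 h2b
          refine Or.inr (Or.inl ⟨p, r, by omega, by omega, ?_⟩)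
          rw [seg_snoc U hpr hql, seg_cons U hql1 hql2]
          simp only [w1, List.append_assoc, List.cons_append, List.singleton_append,
            List.nil_append]
          rw [← h4, ← h2a]
        · have hrqlt : r < qq := lt_of_le_of_ne hrq hrq2
          rw [show mids U p r qq = (seg U p r ++ R :: seg U r (qq-1)) ++ [u U (qq-1)] by
              unfold mids; rw [seg_snoc U hrqlt hql]; simp,
            show M :: (seg U 0 p ++ P :: ((seg U p r ++ R :: seg U r (qq-1)) ++ [u U (qq-1)])) =
              (M :: (seg U 0 p ++ P :: (seg U p r ++ R :: seg U r (qq-1)))) ++ [u U (qq-1)]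
              by simp,
            show xl ++ [ai i, R] = (xl ++ [ai i]) ++ [R] by simp] at h1
          obtain ⟨-, hRu⟩ := snoc_inj h1
          have : isA R := by rw [hRu]; exact u_isA hU (by omega)
          exact absurd this (by decide)
    · exact absurd (hl ▸ (by simp : s1 ∈ xl ++ [ai i, R, s1, Q, ai j] ++ yl))
        (no_ct hU hAB (by decide) (by decide) (Ne.symm (ti_ne i').2.2.2.2.2.1) (by decide)
          (by decide) (by decide))
    · exact absurd (hl ▸ (by simp : s1 ∈ xl ++ [ai i, R, s1, Q, ai j] ++ yl))
        (no_cs2 hU hAB (by decide) (by decide) (by decide) (by decide) (by decide) (by decide))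

lemma iff_r6 (hU : Aword U) (i : Fin 3) (x : Phi) (hx : x = R ∨ isA x) (xl yl : List Phi) :
    GoodL U (xl ++ [ti i, x] ++ yl) ↔ GoodL U (xl ++ [x, ti i] ++ yl) := by
  constructor
  · rintro (hl | ⟨p,c,hpc,hcn,hl⟩ | ⟨p,r,qq,A,B,hAB,hS,hl⟩ | ⟨p,r,qq,i',A,B,hAB,hT,hl⟩ |
      ⟨p,m,qq,A,B,hAB,hS2,hl⟩)
    · exact absurd (hl ▸ (by simp : ti i ∈ xl ++ [ti i, x] ++ yl))
        (no_c0 hU (ti_ne i).2.2.2.2.2.2.2 (notA_ti i))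
    · exact absurd (hl ▸ (by simp : ti i ∈ xl ++ [ti i, x] ++ yl))
        (no_cg hU (ti_ne i).1 (ti_ne i).2.1 (ti_ne i).2.2.2.2.1 (notA_ti i))
    · exact absurd (hl ▸ (by simp : ti i ∈ xl ++ [ti i, x] ++ yl))
        (no_cs1 hU hAB (ti_ne i).1 (ti_ne i).2.1 (ti_ne i).2.2.2.2.2.1 (ti_ne i).2.2.1
          (ti_ne i).2.2.2.1 (notA_ti i))
    · by_cases hii : ti i = ti i'
      · obtain rfl : i = i' := ti_injective hii
        rw [w1_eq_tok, show xl ++ [ti i, x] ++ yl = xl ++ ti i :: (x :: yl) by simp] at hl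
        obtain ⟨h1, h2⟩ := split_unique hl
          (tok_notin_X hU hAB (ti_ne i).1 (ti_ne i).2.1 (ti_ne i).2.2.2.1 (notA_ti i))
          (tok_notin_Y hU hAB (ti_ne i).2.2.1 (ti_ne i).2.2.2.1 (notA_ti i))
        cases B with
        | nil =>
          simp only [List.nil_append] at h2
          injection h2 with h2a h2b
          rcases hx with rfl | hxA
          · exact absurd h2a (by decide)
          · rw [h2a] at hxA; exact absurd hxA (by decide)
        | cons b B' =>
          simp only [List.cons_append] at h2
          injection h2 with h2a h2b
          subst h1 h2b h2a
          refine Or.inr (Or.inr (Or.inr (Or.inl ⟨p, r, qq, i, A ++ [x], B',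
            by simpa using hAB, hT, ?_⟩)))
          simp only [w1, List.append_assoc, List.cons_append, List.singleton_append,
            List.nil_append]
      · exact absurd (hl ▸ (by simp : ti i ∈ xl ++ [ti i, x] ++ yl))
          (no_ct hU hAB (ti_ne i).1 (ti_ne i).2.1 hii (ti_ne i).2.2.1
            (ti_ne i).2.2.2.1 (notA_ti i))
    · exact absurd (hl ▸ (by simp : ti i ∈ xl ++ [ti i, x] ++ yl))
        (no_cs2 hU hAB (ti_ne i).1 (ti_ne i).2.1 (ti_ne i).2.2.2.2.2.2.1 (ti_ne i).2.2.1
          (ti_ne i).2.2.2.1 (notA_ti i))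
  · rintro (hl | ⟨p,c,hpc,hcn,hl⟩ | ⟨p,r,qq,A,B,hAB,hS,hl⟩ | ⟨p,r,qq,i',A,B,hAB,hT,hl⟩ |
      ⟨p,m,qq,A,B,hAB,hS2,hl⟩)
    · exact absurd (hl ▸ (by simp : ti i ∈ xl ++ [x, ti i] ++ yl))
        (no_c0 hU (ti_ne i).2.2.2.2.2.2.2 (notA_ti i))
    · exact absurd (hl ▸ (by simp : ti i ∈ xl ++ [x, ti i] ++ yl))
        (no_cg hU (ti_ne i).1 (ti_ne i).2.1 (ti_ne i).2.2.2.2.1 (notA_ti i))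
    · exact absurd (hl ▸ (by simp : ti i ∈ xl ++ [x, ti i] ++ yl))
        (no_cs1 hU hAB (ti_ne i).1 (ti_ne i).2.1 (ti_ne i).2.2.2.2.2.1 (ti_ne i).2.2.1
          (ti_ne i).2.2.2.1 (notA_ti i))
    · by_cases hii : ti i = ti i'
      · obtain rfl : i = i' := ti_injective hii
        rw [w1_eq_tok, show xl ++ [x, ti i] ++ yl = (xl ++ [x]) ++ ti i :: yl by simp] at hl
        obtain ⟨h1, h2⟩ := split_unique hl
          (tok_notin_X hU hAB (ti_ne i).1 (ti_ne i).2.1 (ti_ne i).2.2.2.1 (notA_ti i))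
          (tok_notin_Y hU hAB (ti_ne i).2.2.1 (ti_ne i).2.2.2.1 (notA_ti i))
        rcases List.eq_nil_or_concat A with rfl | ⟨A'', b, rfl⟩
        · rw [show M :: (seg U 0 p ++ P :: ([] : List Phi)) = (M :: seg U 0 p) ++ [P] by simp]
            at h1
          obtain ⟨-, hxP⟩ := snoc_inj h1
          rcases hx with rfl | hxA
          · exact absurd hxP (by decide)
          · rw [hxP] at hxA; exact absurd hxA (by decide)
        · rw [List.concat_eq_append] at h1 hAB
          rw [show M :: (seg U 0 p ++ P :: (A'' ++ [b])) =
            (M :: (seg U 0 p ++ P :: A'')) ++ [b] by simp] at h1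
          obtain ⟨h3, h4⟩ := snoc_inj h1
          subst h3 h2 h4
          refine Or.inr (Or.inr (Or.inr (Or.inl ⟨p, r, qq, i, A'', x :: B,
            by simpa using hAB, hT, ?_⟩)))
          simp only [w1, List.append_assoc, List.cons_append, List.singleton_append,
            List.nil_append]
      · exact absurd (hl ▸ (by simp : ti i ∈ xl ++ [x, ti i] ++ yl))
          (no_ct hU hAB (ti_ne i).1 (ti_ne i).2.1 hii (ti_ne i).2.2.1
            (ti_ne i).2.2.2.1 (notA_ti i))
    · exact absurd (hl ▸ (by simp : ti i ∈ xl ++ [x, ti i] ++ yl))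
        (no_cs2 hU hAB (ti_ne i).1 (ti_ne i).2.1 (ti_ne i).2.2.2.2.2.2.1 (ti_ne i).2.2.1
          (ti_ne i).2.2.2.1 (notA_ti i))

lemma iff_r7 (hU : Aword U) (hsf : SqFree U) (i : Fin 3) (xl yl : List Phi) :
    GoodL U (xl ++ [P, ai i, ti i] ++ yl) ↔ GoodL U (xl ++ [ai i, P, s1] ++ yl) := by
  constructor
  · rintro (hl | ⟨p,c,hpc,hcn,hl⟩ | ⟨p,r,qq,A,B,hAB,hS,hl⟩ | ⟨p,r,qq,i',A,B,hAB,hT,hl⟩ |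
      ⟨p,m,qq,A,B,hAB,hS2,hl⟩)
    · exact absurd (hl ▸ (by simp : ti i ∈ xl ++ [P, ai i, ti i] ++ yl))
        (no_c0 hU (ti_ne i).2.2.2.2.2.2.2 (notA_ti i))
    · exact absurd (hl ▸ (by simp : ti i ∈ xl ++ [P, ai i, ti i] ++ yl))
        (no_cg hU (ti_ne i).1 (ti_ne i).2.1 (ti_ne i).2.2.2.2.1 (notA_ti i))
    · exact absurd (hl ▸ (by simp : ti i ∈ xl ++ [P, ai i, ti i] ++ yl))
        (no_cs1 hU hAB (ti_ne i).1 (ti_ne i).2.1 (ti_ne i).2.2.2.2.2.1 (ti_ne i).2.2.1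
          (ti_ne i).2.2.2.1 (notA_ti i))
    · by_cases hii : ti i = ti i'
      · obtain rfl : i = i' := ti_injective hii
        rw [w1_eq_tok,
          show xl ++ [P, ai i, ti i] ++ yl = (xl ++ [P, ai i]) ++ ti i :: yl by simp] at hl
        obtain ⟨h1, h2⟩ := split_unique hl
          (tok_notin_X hU hAB (ti_ne i).1 (ti_ne i).2.1 (ti_ne i).2.2.2.1 (notA_ti i))
          (tok_notin_Y hU hAB (ti_ne i).2.2.1 (ti_ne i).2.2.2.1 (notA_ti i))
        rcases List.eq_nil_or_concat A with rfl | ⟨A'', lastA, rfl⟩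
        · rw [show M :: (seg U 0 p ++ P :: ([] : List Phi)) = (M :: seg U 0 p) ++ [P] by simp,
            show xl ++ [P, ai i] = (xl ++ [P]) ++ [ai i] by simp] at h1
          obtain ⟨-, h⟩ := snoc_inj h1
          exact absurd h ((ai_ne i).2.1)
        · rw [List.concat_eq_append] at h1 hAB
          rw [show xl ++ [P, ai i] = (xl ++ [P]) ++ [ai i] by simp,
            show M :: (seg U 0 p ++ P :: (A'' ++ [lastA])) =
              (M :: (seg U 0 p ++ P :: A'')) ++ [lastA] by simp] at h1
          obtain ⟨h3, h4⟩ := snoc_inj h1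
          rw [show xl ++ [P] = xl ++ P :: ([] : List Phi) by simp,
            show M :: (seg U 0 p ++ P :: A'') = (M :: seg U 0 p) ++ P :: A'' by simp] at h3
          obtain ⟨h5, h6⟩ := split_unique h3 (P_notin_head hU)
            (fun hm => (not_mem_midsA hU hAB (by decide) (by decide))
              (List.mem_append_left [lastA] hm))
          obtain ⟨hpr, hrq, hql, hc1, hc2, hc3⟩ := hT
          have hplen : p < U.length := by omega
          rw [← h6, ← h4] at hAB
          unfold mids at hAB
          rw [seg_cons U hpr hplen] at hAB
          simp only [List.nil_append, List.cons_append, List.cons.injEq] at hAB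
          obtain ⟨haiu, hB⟩ := hAB
          subst h5 h2
          refine Or.inr (Or.inr (Or.inl ⟨p+1, r, qq, [], B, ?_, hc1 haiu, ?_⟩))
          · rw [hB]; rfl
          · have hseg : seg U 0 (p+1) = seg U 0 p ++ [u U p] := seg_succ U (Nat.zero_le p) hplen
            simp only [w1, hseg, List.append_assoc, List.cons_append, List.singleton_append,
              List.nil_append]
            rw [← haiu]
      · exact absurd (hl ▸ (by simp : ti i ∈ xl ++ [P, ai i, ti i] ++ yl))
          (no_ct hU hAB (ti_ne i).1 (ti_ne i).2.1 hii (ti_ne i).2.2.1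
            (ti_ne i).2.2.2.1 (notA_ti i))
    · exact absurd (hl ▸ (by simp : ti i ∈ xl ++ [P, ai i, ti i] ++ yl))
        (no_cs2 hU hAB (ti_ne i).1 (ti_ne i).2.1 (ti_ne i).2.2.2.2.2.2.1 (ti_ne i).2.2.1
          (ti_ne i).2.2.2.1 (notA_ti i))
  · rintro (hl | ⟨p,c,hpc,hcn,hl⟩ | ⟨p,r,qq,A,B,hAB,hS,hl⟩ | ⟨p,r,qq,i',A,B,hAB,hT,hl⟩ |
      ⟨p,m,qq,A,B,hAB,hS2,hl⟩)
    · exact absurd (hl ▸ (by simp : s1 ∈ xl ++ [ai i, P, s1] ++ yl))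
        (no_c0 hU (by decide) (by decide))
    · exact absurd (hl ▸ (by simp : s1 ∈ xl ++ [ai i, P, s1] ++ yl))
        (no_cg hU (by decide) (by decide) (by decide) (by decide))
    · rw [w1_eq_tok,
        show xl ++ [ai i, P, s1] ++ yl = (xl ++ [ai i, P]) ++ s1 :: yl by simp] at hl
      obtain ⟨h1, h2⟩ := split_unique hl
        (tok_notin_X hU hAB (by decide) (by decide) (by decide) (by decide))
        (tok_notin_Y hU hAB (by decide) (by decide) (by decide))
      rcases List.eq_nil_or_concat A with rfl | ⟨A'', lastA, rfl⟩
      · rw [show M :: (seg U 0 p ++ P :: ([] : List Phi)) = (M :: seg U 0 p) ++ [P] by simp,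
          show xl ++ [ai i, P] = (xl ++ [ai i]) ++ [P] by simp] at h1
        obtain ⟨h3, -⟩ := snoc_inj h1
        obtain ⟨hpr, hrq, hql, hSafe⟩ := hS
        by_cases hnil : seg U 0 p = []
        · rw [hnil, show (M :: ([] : List Phi)) = [] ++ [M] by simp] at h3
          obtain ⟨-, hM⟩ := snoc_inj h3
          exact absurd hM ((ai_ne i).1)
        · obtain ⟨hp0, h0len⟩ := seg_ne_nil hnil
          rw [seg_snoc U hp0 (by omega),
            show M :: (seg U 0 (p-1) ++ [u U (p-1)]) =
              (M :: seg U 0 (p-1)) ++ [u U (p-1)] by simp] at h3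
          obtain ⟨h5, haiu⟩ := snoc_inj h3
          simp only [List.nil_append] at hAB
          subst h5 h2
          have hmid : mids U (p-1) r qq = u U (p-1) :: mids U p r qq := by
            unfold mids
            rw [seg_cons U (show p-1 < r by omega) (show p-1 < U.length by omega),
              show p-1+1 = p by omega, List.cons_append]
          refine Or.inr (Or.inr (Or.inr (Or.inl ⟨p-1, r, qq, i, [ai i], B, ?_, ?_, ?_⟩)))
          · rw [hmid, ← haiu, hAB]; rfl
          · refine ⟨by omega, hrq, hql, ?_, ?_, ?_⟩
            · intro _
              rw [show p-1+1 = p by omega]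
              exact ⟨hpr, hrq, hql, hSafe⟩
            · intro hrq2 hq
              exact sadm_unshift ⟨hpr, hrq, hql, hSafe⟩ (by omega) hrq2
                (by rw [← haiu]; exact hq)
            · intro hne
              exact absurd haiu hne
          · simp only [w1, List.append_assoc, List.cons_append, List.singleton_append,
              List.nil_append]
      · rw [List.concat_eq_append] at h1 hAB
        rw [show xl ++ [ai i, P] = (xl ++ [ai i]) ++ [P] by simp,
          show M :: (seg U 0 p ++ P :: (A'' ++ [lastA])) =
            (M :: (seg U 0 p ++ P :: A'')) ++ [lastA] by simp] at h1
        obtain ⟨-, hP⟩ := snoc_inj h1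
        exact absurd (List.mem_append_right A'' (by rw [← hP]; exact (List.mem_cons_self (a := _) (l := _))))
          (not_mem_midsA hU hAB (by decide) (by decide))
    · exact absurd (hl ▸ (by simp : s1 ∈ xl ++ [ai i, P, s1] ++ yl))
        (no_ct hU hAB (by decide) (by decide) (Ne.symm (ti_ne i').2.2.2.2.2.1) (by decide)
          (by decide) (by decide))
    · exact absurd (hl ▸ (by simp : s1 ∈ xl ++ [ai i, P, s1] ++ yl))
        (no_cs2 hU hAB (by decide) (by decide) (by decide) (by decide) (by decide) (by decide))

lemma iff_r8 (hU : Aword U) (i j : Fin 3) (hij : i ≠ j) (xl yl : List Phi) :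
    GoodL U (xl ++ [P, ai j, ti i] ++ yl) ↔ GoodL U (xl ++ [ai j, P, s2] ++ yl) := by
  constructor
  · rintro (hl | ⟨p,c,hpc,hcn,hl⟩ | ⟨p,r,qq,A,B,hAB,hS,hl⟩ | ⟨p,r,qq,i',A,B,hAB,hT,hl⟩ |
      ⟨p,m,qq,A,B,hAB,hS2,hl⟩)
    · exact absurd (hl ▸ (by simp : ti i ∈ xl ++ [P, ai j, ti i] ++ yl))
        (no_c0 hU (ti_ne i).2.2.2.2.2.2.2 (notA_ti i))
    · exact absurd (hl ▸ (by simp : ti i ∈ xl ++ [P, ai j, ti i] ++ yl))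
        (no_cg hU (ti_ne i).1 (ti_ne i).2.1 (ti_ne i).2.2.2.2.1 (notA_ti i))
    · exact absurd (hl ▸ (by simp : ti i ∈ xl ++ [P, ai j, ti i] ++ yl))
        (no_cs1 hU hAB (ti_ne i).1 (ti_ne i).2.1 (ti_ne i).2.2.2.2.2.1 (ti_ne i).2.2.1
          (ti_ne i).2.2.2.1 (notA_ti i))
    · by_cases hii : ti i = ti i'
      · obtain rfl : i = i' := ti_injective hii
        rw [w1_eq_tok,
          show xl ++ [P, ai j, ti i] ++ yl = (xl ++ [P, ai j]) ++ ti i :: yl by simp] at hl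
        obtain ⟨h1, h2⟩ := split_unique hl
          (tok_notin_X hU hAB (ti_ne i).1 (ti_ne i).2.1 (ti_ne i).2.2.2.1 (notA_ti i))
          (tok_notin_Y hU hAB (ti_ne i).2.2.1 (ti_ne i).2.2.2.1 (notA_ti i))
        rcases List.eq_nil_or_concat A with rfl | ⟨A'', lastA, rfl⟩
        · rw [show M :: (seg U 0 p ++ P :: ([] : List Phi)) = (M :: seg U 0 p) ++ [P] by simp,
            show xl ++ [P, ai j] = (xl ++ [P]) ++ [ai j] by simp] at h1
          obtain ⟨-, h⟩ := snoc_inj h1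
          exact absurd h ((ai_ne j).2.1)
        · rw [List.concat_eq_append] at h1 hAB
          rw [show xl ++ [P, ai j] = (xl ++ [P]) ++ [ai j] by simp,
            show M :: (seg U 0 p ++ P :: (A'' ++ [lastA])) =
              (M :: (seg U 0 p ++ P :: A'')) ++ [lastA] by simp] at h1
          obtain ⟨h3, h4⟩ := snoc_inj h1
          rw [show xl ++ [P] = xl ++ P :: ([] : List Phi) by simp,
            show M :: (seg U 0 p ++ P :: A'') = (M :: seg U 0 p) ++ P :: A'' by simp] at h3
          obtain ⟨h5, h6⟩ := split_unique h3 (P_notin_head hU)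
            (fun hm => (not_mem_midsA hU hAB (by decide) (by decide))
              (List.mem_append_left [lastA] hm))
          obtain ⟨hpr, hrq, hql, hc1, hc2, hc3⟩ := hT
          have hplen : p < U.length := by omega
          rw [← h6, ← h4] at hAB
          unfold mids at hAB
          rw [seg_cons U hpr hplen] at hAB
          simp only [List.nil_append, List.cons_append, List.cons.injEq] at hAB
          obtain ⟨haju, hB⟩ := hAB
          have hine : ai i ≠ u U p := by
            rw [← haju]; exact fun h => hij (ai_injective h)
          subst h5 h2
          refine Or.inr (Or.inr (Or.inr (Or.inr ⟨p+1, r, qq, [], seg U (p+1) r,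
            by simp, ⟨by omega, hrq, hql, hc3 hine⟩, ?_⟩)))
          have hseg : seg U 0 (p+1) = seg U 0 p ++ [u U p] := seg_succ U (Nat.zero_le p) hplen
          rw [hB]
          simp only [w1, hseg, List.append_assoc, List.cons_append, List.singleton_append,
            List.nil_append]
          rw [← haju]
      · exact absurd (hl ▸ (by simp : ti i ∈ xl ++ [P, ai j, ti i] ++ yl))
          (no_ct hU hAB (ti_ne i).1 (ti_ne i).2.1 hii (ti_ne i).2.2.1
            (ti_ne i).2.2.2.1 (notA_ti i))
    · exact absurd (hl ▸ (by simp : ti i ∈ xl ++ [P, ai j, ti i] ++ yl))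
        (no_cs2 hU hAB (ti_ne i).1 (ti_ne i).2.1 (ti_ne i).2.2.2.2.2.2.1 (ti_ne i).2.2.1
          (ti_ne i).2.2.2.1 (notA_ti i))
  · rintro (hl | ⟨p,c,hpc,hcn,hl⟩ | ⟨p,r,qq,A,B,hAB,hS,hl⟩ | ⟨p,r,qq,i',A,B,hAB,hT,hl⟩ |
      ⟨p,m,qq,A,B,hAB,hS2,hl⟩)
    · exact absurd (hl ▸ (by simp : s2 ∈ xl ++ [ai j, P, s2] ++ yl))
        (no_c0 hU (by decide) (by decide))
    · exact absurd (hl ▸ (by simp : s2 ∈ xl ++ [ai j, P, s2] ++ yl))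
        (no_cg hU (by decide) (by decide) (by decide) (by decide))
    · exact absurd (hl ▸ (by simp : s2 ∈ xl ++ [ai j, P, s2] ++ yl))
        (no_cs1 hU hAB (by decide) (by decide) (by decide) (by decide) (by decide) (by decide))
    · exact absurd (hl ▸ (by simp : s2 ∈ xl ++ [ai j, P, s2] ++ yl))
        (no_ct hU hAB (by decide) (by decide) (Ne.symm (ti_ne i').2.2.2.2.2.2.1) (by decide)
          (by decide) (by decide))
    · rw [w1_eq_tok,
        show xl ++ [ai j, P, s2] ++ yl = (xl ++ [ai j, P]) ++ s2 :: yl by simp] at hl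
      obtain ⟨h1, h2⟩ := split_unique hl
        (tok_notin_X2 hU hAB (by decide) (by decide) (by decide))
        (tok_notin_Y2 hU hAB (by decide) (by decide) (by decide))
      rcases List.eq_nil_or_concat A with rfl | ⟨A'', lastA, rfl⟩
      · rw [show M :: (seg U 0 p ++ P :: ([] : List Phi)) = (M :: seg U 0 p) ++ [P] by simp,
          show xl ++ [ai j, P] = (xl ++ [ai j]) ++ [P] by simp] at h1
        obtain ⟨h3, -⟩ := snoc_inj h1
        obtain ⟨hS2a, hS2b, hS2c, hS2d⟩ := hS2
        by_cases hnil : seg U 0 p = []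
        · rw [hnil, show (M :: ([] : List Phi)) = [] ++ [M] by simp] at h3
          obtain ⟨-, hM⟩ := snoc_inj h3
          exact absurd hM ((ai_ne j).1)
        · obtain ⟨hp0, h0len⟩ := seg_ne_nil hnil
          rw [seg_snoc U hp0 (by omega),
            show M :: (seg U 0 (p-1) ++ [u U (p-1)]) =
              (M :: seg U 0 (p-1)) ++ [u U (p-1)] by simp] at h3
          obtain ⟨h5, haju⟩ := snoc_inj h3
          simp only [List.nil_append] at hAB
          subst h5 h2
          have hmid : mids U (p-1) m qq = u U (p-1) :: (seg U p m ++ R :: seg U m qq) := by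
            unfold mids
            rw [seg_cons U (show p-1 < m by omega) (show p-1 < U.length by omega),
              show p-1+1 = p by omega, List.cons_append]
          refine Or.inr (Or.inr (Or.inr (Or.inl ⟨p-1, m, qq, i, [ai j],
            B ++ R :: seg U m qq, ?_, ?_, ?_⟩)))
          · rw [hmid, ← haju, hAB]; rfl
          · refine ⟨by omega, hS2b, hS2c, ?_, ?_, ?_⟩
            · intro h
              exact absurd (ai_injective (h.trans haju.symm)) hij
            · intro hmq hq
              refine sadm_clash (by omega) (by omega) (by omega) (by omega) ?_
              rw [← haju, ← hq]
              exact fun h => hij (ai_injective h.symm)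
            · intro _
              rw [show p-1+1 = p by omega]
              exact hS2d
          · simp only [w1, List.append_assoc, List.cons_append, List.singleton_append,
              List.nil_append]
      · rw [List.concat_eq_append] at h1 hAB
        rw [show xl ++ [ai j, P] = (xl ++ [ai j]) ++ [P] by simp,
          show M :: (seg U 0 p ++ P :: (A'' ++ [lastA])) =
            (M :: (seg U 0 p ++ P :: A'')) ++ [lastA] by simp] at h1
        obtain ⟨-, hP⟩ := snoc_inj h1
        have : P ∈ seg U p m := hAB ▸ List.mem_append_left B
          (List.mem_append_right A'' (by rw [← hP]; exact (List.mem_cons_self (a := _) (l := _))))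
        exact absurd (hU _ (mem_seg this)) (by decide)

lemma iff_r9 (hU : Aword U) (i : Fin 3) (j : Fin 2) (xl yl : List Phi) :
    GoodL U (xl ++ [si j, ai i] ++ yl) ↔ GoodL U (xl ++ [ai i, si j] ++ yl) := by
  fin_cases j
  · show GoodL U (xl ++ [s1, ai i] ++ yl) ↔ GoodL U (xl ++ [ai i, s1] ++ yl)
    constructor
    · rintro (hl | ⟨p,c,hpc,hcn,hl⟩ | ⟨p,r,qq,A,B,hAB,hS,hl⟩ | ⟨p,r,qq,i',A,B,hAB,hT,hl⟩ |
        ⟨p,m,qq,A,B,hAB,hS2,hl⟩)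
      · exact absurd (hl ▸ (by simp : s1 ∈ xl ++ [s1, ai i] ++ yl))
          (no_c0 hU (by decide) (by decide))
      · exact absurd (hl ▸ (by simp : s1 ∈ xl ++ [s1, ai i] ++ yl))
          (no_cg hU (by decide) (by decide) (by decide) (by decide))
      · rw [w1_eq_tok, show xl ++ [s1, ai i] ++ yl = xl ++ s1 :: (ai i :: yl) by simp] at hl
        obtain ⟨h1, h2⟩ := split_unique hl
          (tok_notin_X hU hAB (by decide) (by decide) (by decide) (by decide))
          (tok_notin_Y hU hAB (by decide) (by decide) (by decide))
        cases B with
        | nil =>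
          simp only [List.nil_append] at h2
          injection h2 with h2a h2b
          exact absurd h2a ((ai_ne i).2.2.1)
        | cons b B' =>
          simp only [List.cons_append] at h2
          injection h2 with h2a h2b
          subst h1 h2b; rw [← h2a] at hAB
          refine Or.inr (Or.inr (Or.inl ⟨p, r, qq, A ++ [ai i], B',
            by simpa using hAB, hS, ?_⟩))
          simp only [w1, List.append_assoc, List.cons_append, List.singleton_append,
            List.nil_append]
      · exact absurd (hl ▸ (by simp : s1 ∈ xl ++ [s1, ai i] ++ yl))
          (no_ct hU hAB (by decide) (by decide) (Ne.symm (ti_ne i').2.2.2.2.2.1) (by decide)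
            (by decide) (by decide))
      · exact absurd (hl ▸ (by simp : s1 ∈ xl ++ [s1, ai i] ++ yl))
          (no_cs2 hU hAB (by decide) (by decide) (by decide) (by decide) (by decide) (by decide))
    · rintro (hl | ⟨p,c,hpc,hcn,hl⟩ | ⟨p,r,qq,A,B,hAB,hS,hl⟩ | ⟨p,r,qq,i',A,B,hAB,hT,hl⟩ |
        ⟨p,m,qq,A,B,hAB,hS2,hl⟩)
      · exact absurd (hl ▸ (by simp : s1 ∈ xl ++ [ai i, s1] ++ yl))
          (no_c0 hU (by decide) (by decide))
      · exact absurd (hl ▸ (by simp : s1 ∈ xl ++ [ai i, s1] ++ yl))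
          (no_cg hU (by decide) (by decide) (by decide) (by decide))
      · rw [w1_eq_tok, show xl ++ [ai i, s1] ++ yl = (xl ++ [ai i]) ++ s1 :: yl by simp] at hl
        obtain ⟨h1, h2⟩ := split_unique hl
          (tok_notin_X hU hAB (by decide) (by decide) (by decide) (by decide))
          (tok_notin_Y hU hAB (by decide) (by decide) (by decide))
        rcases List.eq_nil_or_concat A with rfl | ⟨A'', b, rfl⟩
        · rw [show M :: (seg U 0 p ++ P :: ([] : List Phi)) = (M :: seg U 0 p) ++ [P] by simp]
            at h1
          obtain ⟨-, hxP⟩ := snoc_inj h1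
          exact absurd hxP ((ai_ne i).2.1)
        · rw [List.concat_eq_append] at h1 hAB
          rw [show M :: (seg U 0 p ++ P :: (A'' ++ [b])) =
            (M :: (seg U 0 p ++ P :: A'')) ++ [b] by simp] at h1
          obtain ⟨h3, h4⟩ := snoc_inj h1
          subst h3 h2 h4
          refine Or.inr (Or.inr (Or.inl ⟨p, r, qq, A'', ai i :: B,
            by simpa using hAB, hS, ?_⟩))
          simp only [w1, List.append_assoc, List.cons_append, List.singleton_append,
            List.nil_append]
      · exact absurd (hl ▸ (by simp : s1 ∈ xl ++ [ai i, s1] ++ yl))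
          (no_ct hU hAB (by decide) (by decide) (Ne.symm (ti_ne i').2.2.2.2.2.1) (by decide)
            (by decide) (by decide))
      · exact absurd (hl ▸ (by simp : s1 ∈ xl ++ [ai i, s1] ++ yl))
          (no_cs2 hU hAB (by decide) (by decide) (by decide) (by decide) (by decide) (by decide))
  · show GoodL U (xl ++ [s2, ai i] ++ yl) ↔ GoodL U (xl ++ [ai i, s2] ++ yl)
    constructor
    · rintro (hl | ⟨p,c,hpc,hcn,hl⟩ | ⟨p,r,qq,A,B,hAB,hS,hl⟩ | ⟨p,r,qq,i',A,B,hAB,hT,hl⟩ |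
        ⟨p,m,qq,A,B,hAB,hS2,hl⟩)
      · exact absurd (hl ▸ (by simp : s2 ∈ xl ++ [s2, ai i] ++ yl))
          (no_c0 hU (by decide) (by decide))
      · exact absurd (hl ▸ (by simp : s2 ∈ xl ++ [s2, ai i] ++ yl))
          (no_cg hU (by decide) (by decide) (by decide) (by decide))
      · exact absurd (hl ▸ (by simp : s2 ∈ xl ++ [s2, ai i] ++ yl))
          (no_cs1 hU hAB (by decide) (by decide) (by decide) (by decide) (by decide) (by decide))
      · exact absurd (hl ▸ (by simp : s2 ∈ xl ++ [s2, ai i] ++ yl))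
          (no_ct hU hAB (by decide) (by decide) (Ne.symm (ti_ne i').2.2.2.2.2.2.1) (by decide)
            (by decide) (by decide))
      · rw [w1_eq_tok, show xl ++ [s2, ai i] ++ yl = xl ++ s2 :: (ai i :: yl) by simp] at hl
        obtain ⟨h1, h2⟩ := split_unique hl
          (tok_notin_X2 hU hAB (by decide) (by decide) (by decide))
          (tok_notin_Y2 hU hAB (by decide) (by decide) (by decide))
        cases B with
        | nil =>
          simp only [List.nil_append] at h2
          injection h2 with h2a h2b
          exact absurd h2a ((ai_ne i).2.2.2.1)
        | cons b B' =>
          simp only [List.cons_append] at h2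
          injection h2 with h2a h2b
          subst h1 h2b; rw [← h2a] at hAB
          refine Or.inr (Or.inr (Or.inr (Or.inr ⟨p, m, qq, A ++ [ai i], B',
            by simpa using hAB, hS2, ?_⟩)))
          simp only [w1, List.append_assoc, List.cons_append, List.singleton_append,
            List.nil_append]
    · rintro (hl | ⟨p,c,hpc,hcn,hl⟩ | ⟨p,r,qq,A,B,hAB,hS,hl⟩ | ⟨p,r,qq,i',A,B,hAB,hT,hl⟩ |
        ⟨p,m,qq,A,B,hAB,hS2,hl⟩)
      · exact absurd (hl ▸ (by simp : s2 ∈ xl ++ [ai i, s2] ++ yl))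
          (no_c0 hU (by decide) (by decide))
      · exact absurd (hl ▸ (by simp : s2 ∈ xl ++ [ai i, s2] ++ yl))
          (no_cg hU (by decide) (by decide) (by decide) (by decide))
      · exact absurd (hl ▸ (by simp : s2 ∈ xl ++ [ai i, s2] ++ yl))
          (no_cs1 hU hAB (by decide) (by decide) (by decide) (by decide) (by decide) (by decide))
      · exact absurd (hl ▸ (by simp : s2 ∈ xl ++ [ai i, s2] ++ yl))
          (no_ct hU hAB (by decide) (by decide) (Ne.symm (ti_ne i').2.2.2.2.2.2.1) (by decide)
            (by decide) (by decide))
      · rw [w1_eq_tok, show xl ++ [ai i, s2] ++ yl = (xl ++ [ai i]) ++ s2 :: yl by simp] at hl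
        obtain ⟨h1, h2⟩ := split_unique hl
          (tok_notin_X2 hU hAB (by decide) (by decide) (by decide))
          (tok_notin_Y2 hU hAB (by decide) (by decide) (by decide))
        rcases List.eq_nil_or_concat A with rfl | ⟨A'', b, rfl⟩
        · rw [show M :: (seg U 0 p ++ P :: ([] : List Phi)) = (M :: seg U 0 p) ++ [P] by simp]
            at h1
          obtain ⟨-, hxP⟩ := snoc_inj h1
          exact absurd hxP ((ai_ne i).2.1)
        · rw [List.concat_eq_append] at h1 hAB
          rw [show M :: (seg U 0 p ++ P :: (A'' ++ [b])) =
            (M :: (seg U 0 p ++ P :: A'')) ++ [b] by simp] at h1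
          obtain ⟨h3, h4⟩ := snoc_inj h1
          subst h3 h2 h4
          refine Or.inr (Or.inr (Or.inr (Or.inr ⟨p, m, qq, A'', ai i :: B,
            by simpa using hAB, hS2, ?_⟩)))
          simp only [w1, List.append_assoc, List.cons_append, List.singleton_append,
            List.nil_append]

lemma iff_r10 (hU : Aword U) (xl yl : List Phi) :
    GoodL U (xl ++ [s1, R] ++ yl) ↔ GoodL U (xl ++ [R, s1] ++ yl) := by
  constructor
  · rintro (hl | ⟨p,c,hpc,hcn,hl⟩ | ⟨p,r,qq,A,B,hAB,hS,hl⟩ | ⟨p,r,qq,i',A,B,hAB,hT,hl⟩ |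
      ⟨p,m,qq,A,B,hAB,hS2,hl⟩)
    · exact absurd (hl ▸ (by simp : s1 ∈ xl ++ [s1, R] ++ yl))
        (no_c0 hU (by decide) (by decide))
    · exact absurd (hl ▸ (by simp : s1 ∈ xl ++ [s1, R] ++ yl))
        (no_cg hU (by decide) (by decide) (by decide) (by decide))
    · rw [w1_eq_tok, show xl ++ [s1, R] ++ yl = xl ++ s1 :: (R :: yl) by simp] at hl
      obtain ⟨h1, h2⟩ := split_unique hl
        (tok_notin_X hU hAB (by decide) (by decide) (by decide) (by decide))
        (tok_notin_Y hU hAB (by decide) (by decide) (by decide))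
      cases B with
      | nil =>
        simp only [List.nil_append] at h2
        injection h2 with h2a h2b
        exact absurd h2a (by decide)
      | cons b B' =>
        simp only [List.cons_append] at h2
        injection h2 with h2a h2b
        subst h1 h2b; rw [← h2a] at hAB
        refine Or.inr (Or.inr (Or.inl ⟨p, r, qq, A ++ [R], B',
          by simpa using hAB, hS, ?_⟩))
        simp only [w1, List.append_assoc, List.cons_append, List.singleton_append,
          List.nil_append]
    · exact absurd (hl ▸ (by simp : s1 ∈ xl ++ [s1, R] ++ yl))
        (no_ct hU hAB (by decide) (by decide) (Ne.symm (ti_ne i').2.2.2.2.2.1) (by decide)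
          (by decide) (by decide))
    · exact absurd (hl ▸ (by simp : s1 ∈ xl ++ [s1, R] ++ yl))
        (no_cs2 hU hAB (by decide) (by decide) (by decide) (by decide) (by decide) (by decide))
  · rintro (hl | ⟨p,c,hpc,hcn,hl⟩ | ⟨p,r,qq,A,B,hAB,hS,hl⟩ | ⟨p,r,qq,i',A,B,hAB,hT,hl⟩ |
      ⟨p,m,qq,A,B,hAB,hS2,hl⟩)
    · exact absurd (hl ▸ (by simp : s1 ∈ xl ++ [R, s1] ++ yl))
        (no_c0 hU (by decide) (by decide))
    · exact absurd (hl ▸ (by simp : s1 ∈ xl ++ [R, s1] ++ yl))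
        (no_cg hU (by decide) (by decide) (by decide) (by decide))
    · rw [w1_eq_tok, show xl ++ [R, s1] ++ yl = (xl ++ [R]) ++ s1 :: yl by simp] at hl
      obtain ⟨h1, h2⟩ := split_unique hl
        (tok_notin_X hU hAB (by decide) (by decide) (by decide) (by decide))
        (tok_notin_Y hU hAB (by decide) (by decide) (by decide))
      rcases List.eq_nil_or_concat A with rfl | ⟨A'', b, rfl⟩
      · rw [show M :: (seg U 0 p ++ P :: ([] : List Phi)) = (M :: seg U 0 p) ++ [P] by simp]
          at h1
        obtain ⟨-, hxP⟩ := snoc_inj h1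
        exact absurd hxP (by decide)
      · rw [List.concat_eq_append] at h1 hAB
        rw [show M :: (seg U 0 p ++ P :: (A'' ++ [b])) =
          (M :: (seg U 0 p ++ P :: A'')) ++ [b] by simp] at h1
        obtain ⟨h3, h4⟩ := snoc_inj h1
        subst h3 h2 h4
        refine Or.inr (Or.inr (Or.inl ⟨p, r, qq, A'', R :: B,
          by simpa using hAB, hS, ?_⟩))
        simp only [w1, List.append_assoc, List.cons_append, List.singleton_append,
          List.nil_append]
    · exact absurd (hl ▸ (by simp : s1 ∈ xl ++ [R, s1] ++ yl))
        (no_ct hU hAB (by decide) (by decide) (Ne.symm (ti_ne i').2.2.2.2.2.1) (by decide)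
          (by decide) (by decide))
    · exact absurd (hl ▸ (by simp : s1 ∈ xl ++ [R, s1] ++ yl))
        (no_cs2 hU hAB (by decide) (by decide) (by decide) (by decide) (by decide) (by decide))

lemma iff_r11 (hU : Aword U) (hsf : SqFree U) (i : Fin 3) (xl yl : List Phi) :
    GoodL U (xl ++ [s1, Q, ai i] ++ yl) ↔ GoodL U (xl ++ [ti i, ai i, Q] ++ yl) := by
  constructor
  · rintro (hl | ⟨p,c,hpc,hcn,hl⟩ | ⟨p,r,qq,A,B,hAB,hS,hl⟩ | ⟨p,r,qq,i',A,B,hAB,hT,hl⟩ |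
      ⟨p,m,qq,A,B,hAB,hS2,hl⟩)
    · exact absurd (hl ▸ (by simp : s1 ∈ xl ++ [s1, Q, ai i] ++ yl))
        (no_c0 hU (by decide) (by decide))
    · exact absurd (hl ▸ (by simp : s1 ∈ xl ++ [s1, Q, ai i] ++ yl))
        (no_cg hU (by decide) (by decide) (by decide) (by decide))
    · rw [w1_eq_tok,
        show xl ++ [s1, Q, ai i] ++ yl = xl ++ s1 :: ([Q, ai i] ++ yl) by simp] at hl
      obtain ⟨h1, h2⟩ := split_unique hl
        (tok_notin_X hU hAB (by decide) (by decide) (by decide) (by decide))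
        (tok_notin_Y hU hAB (by decide) (by decide) (by decide))
      cases B with
      | cons b B' =>
        simp only [List.cons_append, List.cons.injEq] at h2
        have hbQ : b = Q := h2.1.symm
        subst hbQ
        rcases memB_mids hU hAB ((List.mem_cons_self (a := _) (l := B'))) with h | h
        · exact absurd h (by decide)
        · exact absurd h (by decide)
      | nil =>
        simp only [List.nil_append, List.cons_append, List.cons.injEq] at h2
        obtain ⟨-, h2⟩ := h2
        have hne : seg U qq U.length ≠ [] := by rw [← h2]; simp
        obtain ⟨hql1, hql2⟩ := seg_ne_nil hne
        rw [seg_cons U hql1 hql2] at h2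
        injection h2 with h2a h2b
        obtain ⟨hpr, hrq, hql, hSafe⟩ := hS
        rw [List.append_nil] at hAB
        subst h1 h2b
        refine Or.inr (Or.inr (Or.inr (Or.inl ⟨p, r, qq+1, i, A, [ai i], ?_, ?_, ?_⟩)))
        · rw [hAB]
          unfold mids
          rw [seg_succ U hrq hql2, ← h2a]
          simp
        · refine ⟨hpr, by omega, by omega, ?_, ?_, ?_⟩
          · intro h
            exact sadm_shift ⟨hpr, hrq, hql, hSafe⟩ hql2 (h.symm.trans h2a)
          · intro _ _
            exact ⟨hpr, hrq, hql, hSafe⟩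
          · intro _
            omega
        · simp only [w1, List.append_assoc, List.cons_append, List.singleton_append,
            List.nil_append]
    · exact absurd (hl ▸ (by simp : s1 ∈ xl ++ [s1, Q, ai i] ++ yl))
        (no_ct hU hAB (by decide) (by decide) (Ne.symm (ti_ne i').2.2.2.2.2.1) (by decide)
          (by decide) (by decide))
    · exact absurd (hl ▸ (by simp : s1 ∈ xl ++ [s1, Q, ai i] ++ yl))
        (no_cs2 hU hAB (by decide) (by decide) (by decide) (by decide) (by decide) (by decide))
  · rintro (hl | ⟨p,c,hpc,hcn,hl⟩ | ⟨p,r,qq,A,B,hAB,hS,hl⟩ | ⟨p,r,qq,i',A,B,hAB,hT,hl⟩ |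
      ⟨p,m,qq,A,B,hAB,hS2,hl⟩)
    · exact absurd (hl ▸ (by simp : ti i ∈ xl ++ [ti i, ai i, Q] ++ yl))
        (no_c0 hU (ti_ne i).2.2.2.2.2.2.2 (notA_ti i))
    · exact absurd (hl ▸ (by simp : ti i ∈ xl ++ [ti i, ai i, Q] ++ yl))
        (no_cg hU (ti_ne i).1 (ti_ne i).2.1 (ti_ne i).2.2.2.2.1 (notA_ti i))
    · exact absurd (hl ▸ (by simp : ti i ∈ xl ++ [ti i, ai i, Q] ++ yl))
        (no_cs1 hU hAB (ti_ne i).1 (ti_ne i).2.1 (ti_ne i).2.2.2.2.2.1 (ti_ne i).2.2.1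
          (ti_ne i).2.2.2.1 (notA_ti i))
    · by_cases hii : ti i = ti i'
      · obtain rfl : i = i' := ti_injective hii
        rw [w1_eq_tok,
          show xl ++ [ti i, ai i, Q] ++ yl = xl ++ ti i :: ([ai i, Q] ++ yl) by simp] at hl
        obtain ⟨h1, h2⟩ := split_unique hl
          (tok_notin_X hU hAB (ti_ne i).1 (ti_ne i).2.1 (ti_ne i).2.2.2.1 (notA_ti i))
          (tok_notin_Y hU hAB (ti_ne i).2.2.1 (ti_ne i).2.2.2.1 (notA_ti i))
        cases B with
        | nil =>
          simp only [List.nil_append, List.cons_append, List.cons.injEq] at h2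
          exact absurd h2.1 ((ai_ne i).2.2.1)
        | cons b B' =>
          simp only [List.cons_append, List.cons.injEq] at h2
          obtain ⟨hb, h2⟩ := h2
          cases B' with
          | cons b' B'' =>
            simp only [List.cons_append, List.cons.injEq] at h2
            have hbQ : b' = Q := h2.1.symm
            subst hbQ
            rcases memB_mids hU hAB (List.mem_cons_of_mem b ((List.mem_cons_self (a := _) (l := B''))))
              with h | h
            · exact absurd h (by decide)
            · exact absurd h (by decide)
          | nil =>
            simp only [List.nil_append, List.cons_append, List.cons.injEq] at h2
            obtain ⟨-, h2⟩ := h2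
            obtain ⟨hpr, hrq, hql, hc1, hc2, hc3⟩ := hT
            subst hb h2 h1
            by_cases hrq2 : r = qq
            · subst hrq2
              rw [show mids U p r r = seg U p r ++ [R] by unfold mids; rw [seg_self]] at hAB
              obtain ⟨-, hR⟩ := snoc_inj hAB
              exact absurd hR ((ai_ne i).2.2.2.1)
            · have hrqlt : r < qq := lt_of_le_of_ne hrq hrq2
              have hmid : mids U p r qq = mids U p r (qq-1) ++ [u U (qq-1)] := by
                unfold mids
                rw [seg_snoc U hrqlt hql]
                simp [List.append_assoc]
              rw [hmid] at hAB
              obtain ⟨hA, haiu⟩ := snoc_inj hAB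
              refine Or.inr (Or.inr (Or.inl ⟨p, r, qq-1, A, [],
                by rw [List.append_nil, hA], hc2 hrqlt haiu, ?_⟩))
              have hseg : seg U (qq-1) U.length = u U (qq-1) :: seg U qq U.length := by
                rw [seg_cons U (a := qq-1) (b := U.length) (by omega) (by omega),
                  show qq-1+1 = qq by omega]
              rw [hseg, ← haiu]
              simp only [w1, List.append_assoc, List.cons_append, List.singleton_append,
                List.nil_append]
      · exact absurd (hl ▸ (by simp : ti i ∈ xl ++ [ti i, ai i, Q] ++ yl))
          (no_ct hU hAB (ti_ne i).1 (ti_ne i).2.1 hii (ti_ne i).2.2.1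
            (ti_ne i).2.2.2.1 (notA_ti i))
    · exact absurd (hl ▸ (by simp : ti i ∈ xl ++ [ti i, ai i, Q] ++ yl))
        (no_cs2 hU hAB (ti_ne i).1 (ti_ne i).2.1 (ti_ne i).2.2.2.2.2.2.1 (ti_ne i).2.2.1
          (ti_ne i).2.2.2.1 (notA_ti i))

lemma iff_r13 (hU : Aword U) (i : Fin 3) (xl yl : List Phi) :
    GoodL U (xl ++ [s2, R, ai i] ++ yl) ↔ GoodL U (xl ++ [ai i, s2, R] ++ yl) := by
  constructor
  · rintro (hl | ⟨p,c,hpc,hcn,hl⟩ | ⟨p,r,qq,A,B,hAB,hS,hl⟩ | ⟨p,r,qq,i',A,B,hAB,hT,hl⟩ |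
      ⟨p,m,qq,A,B,hAB,hS2,hl⟩)
    · exact absurd (hl ▸ (by simp : s2 ∈ xl ++ [s2, R, ai i] ++ yl))
        (no_c0 hU (by decide) (by decide))
    · exact absurd (hl ▸ (by simp : s2 ∈ xl ++ [s2, R, ai i] ++ yl))
        (no_cg hU (by decide) (by decide) (by decide) (by decide))
    · exact absurd (hl ▸ (by simp : s2 ∈ xl ++ [s2, R, ai i] ++ yl))
        (no_cs1 hU hAB (by decide) (by decide) (by decide) (by decide) (by decide) (by decide))
    · exact absurd (hl ▸ (by simp : s2 ∈ xl ++ [s2, R, ai i] ++ yl))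
        (no_ct hU hAB (by decide) (by decide) (Ne.symm (ti_ne i').2.2.2.2.2.2.1) (by decide)
          (by decide) (by decide))
    · rw [w1_eq_tok, show xl ++ [s2, R, ai i] ++ yl = xl ++ s2 :: ([R, ai i] ++ yl) by simp]
        at hl
      obtain ⟨h1, h2⟩ := split_unique hl
        (tok_notin_X2 hU hAB (by decide) (by decide) (by decide))
        (tok_notin_Y2 hU hAB (by decide) (by decide) (by decide))
      cases B with
      | cons b B' =>
        simp only [List.cons_append, List.cons.injEq] at h2
        have : isA R := by
          rw [h2.1]
          exact hU _ (mem_seg (hAB ▸ List.mem_append_right A ((List.mem_cons_self (a := b) (l := B')))))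
        exact absurd this (by decide)
      | nil =>
        simp only [List.nil_append, List.cons_append, List.cons.injEq] at h2
        obtain ⟨-, h2⟩ := h2
        obtain ⟨hS2a, hS2b, hS2c, hS2d⟩ := hS2
        by_cases hmq : m = qq
        · subst hmq
          rw [seg_self, List.nil_append] at h2
          injection h2 with h2a h2b
          exact absurd h2a ((ai_ne i).2.2.1)
        · have hmlt : m < qq := lt_of_le_of_ne hS2b hmq
          have hmlen : m < U.length := by omega
          rw [seg_cons U hmlt hmlen, List.cons_append] at h2
          injection h2 with h2a h2b
          subst h1 h2b
          rw [List.append_nil] at hAB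
          refine Or.inr (Or.inr (Or.inr (Or.inr ⟨p, m+1, qq, A ++ [ai i], [],
            ?_, ⟨by omega, by omega, hS2c, hS2d⟩, ?_⟩)))
          · rw [List.append_nil, seg_succ U (by omega) hmlen, hAB, h2a]
          · simp only [w1, List.append_assoc, List.cons_append, List.singleton_append,
              List.nil_append]
  · rintro (hl | ⟨p,c,hpc,hcn,hl⟩ | ⟨p,r,qq,A,B,hAB,hS,hl⟩ | ⟨p,r,qq,i',A,B,hAB,hT,hl⟩ |
      ⟨p,m,qq,A,B,hAB,hS2,hl⟩)
    · exact absurd (hl ▸ (by simp : s2 ∈ xl ++ [ai i, s2, R] ++ yl))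
        (no_c0 hU (by decide) (by decide))
    · exact absurd (hl ▸ (by simp : s2 ∈ xl ++ [ai i, s2, R] ++ yl))
        (no_cg hU (by decide) (by decide) (by decide) (by decide))
    · exact absurd (hl ▸ (by simp : s2 ∈ xl ++ [ai i, s2, R] ++ yl))
        (no_cs1 hU hAB (by decide) (by decide) (by decide) (by decide) (by decide) (by decide))
    · exact absurd (hl ▸ (by simp : s2 ∈ xl ++ [ai i, s2, R] ++ yl))
        (no_ct hU hAB (by decide) (by decide) (Ne.symm (ti_ne i').2.2.2.2.2.2.1) (by decide)
          (by decide) (by decide))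
    · rw [w1_eq_tok, show xl ++ [ai i, s2, R] ++ yl = (xl ++ [ai i]) ++ s2 :: ([R] ++ yl)
        by simp] at hl
      obtain ⟨h1, h2⟩ := split_unique hl
        (tok_notin_X2 hU hAB (by decide) (by decide) (by decide))
        (tok_notin_Y2 hU hAB (by decide) (by decide) (by decide))
      cases B with
      | cons b B' =>
        simp only [List.cons_append, List.cons.injEq] at h2
        have : isA R := by
          rw [h2.1]
          exact hU _ (mem_seg (hAB ▸ List.mem_append_right A ((List.mem_cons_self (a := b) (l := B')))))
        exact absurd this (by decide)
      | nil =>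
        simp only [List.nil_append, List.cons_append, List.cons.injEq] at h2
        obtain ⟨-, h2⟩ := h2
        rw [List.append_nil] at hAB
        obtain ⟨hS2a, hS2b, hS2c, hS2d⟩ := hS2
        rcases List.eq_nil_or_concat A with rfl | ⟨A'', b, rfl⟩
        · rw [show M :: (seg U 0 p ++ P :: ([] : List Phi)) = (M :: seg U 0 p) ++ [P] by simp]
            at h1
          obtain ⟨-, hxP⟩ := snoc_inj h1
          exact absurd hxP ((ai_ne i).2.1)
        · rw [List.concat_eq_append] at h1 hAB
          rw [show M :: (seg U 0 p ++ P :: (A'' ++ [b])) =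
            (M :: (seg U 0 p ++ P :: A'')) ++ [b] by simp] at h1
          obtain ⟨h3, h4⟩ := snoc_inj h1
          have hApm : A'' ++ [b] = seg U p m := hAB
          have hnil : seg U p m ≠ [] := by rw [← hApm]; simp
          obtain ⟨hpm, hplen⟩ := seg_ne_nil hnil
          rw [seg_snoc U hpm (by omega)] at hApm
          obtain ⟨hA'', hbu⟩ := snoc_inj hApm
          subst h3 h2 h4
          refine Or.inr (Or.inr (Or.inr (Or.inr ⟨p, m-1, qq, A'', [],
            by rw [List.append_nil, hA''], ⟨by omega, by omega, hS2c, hS2d⟩, ?_⟩)))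
          have hseg : seg U (m-1) qq = u U (m-1) :: seg U m qq := by
            rw [seg_cons U (a := m-1) (b := qq) (by omega) (by omega),
              show m - 1 + 1 = m by omega]
          rw [hseg, ← hbu]
          simp only [w1, List.append_assoc, List.cons_append, List.singleton_append,
            List.nil_append]

lemma iff_r14 (hU : Aword U) (hsf : SqFree U) (i : Fin 3) (xl yl : List Phi) :
    GoodL U (xl ++ [s2, R, Q, ai i] ++ yl) ↔ GoodL U (xl ++ [R, ti i, ai i, Q] ++ yl) := by
  constructor
  · rintro (hl | ⟨p,c,hpc,hcn,hl⟩ | ⟨p,r,qq,A,B,hAB,hS,hl⟩ | ⟨p,r,qq,i',A,B,hAB,hT,hl⟩ |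
      ⟨p,m,qq,A,B,hAB,hS2,hl⟩)
    · exact absurd (hl ▸ (by simp : s2 ∈ xl ++ [s2, R, Q, ai i] ++ yl))
        (no_c0 hU (by decide) (by decide))
    · exact absurd (hl ▸ (by simp : s2 ∈ xl ++ [s2, R, Q, ai i] ++ yl))
        (no_cg hU (by decide) (by decide) (by decide) (by decide))
    · exact absurd (hl ▸ (by simp : s2 ∈ xl ++ [s2, R, Q, ai i] ++ yl))
        (no_cs1 hU hAB (by decide) (by decide) (by decide) (by decide) (by decide) (by decide))
    · exact absurd (hl ▸ (by simp : s2 ∈ xl ++ [s2, R, Q, ai i] ++ yl))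
        (no_ct hU hAB (by decide) (by decide) (Ne.symm (ti_ne i').2.2.2.2.2.2.1) (by decide)
          (by decide) (by decide))
    · rw [w1_eq_tok,
        show xl ++ [s2, R, Q, ai i] ++ yl = xl ++ s2 :: ([R, Q, ai i] ++ yl) by simp] at hl
      obtain ⟨h1, h2⟩ := split_unique hl
        (tok_notin_X2 hU hAB (by decide) (by decide) (by decide))
        (tok_notin_Y2 hU hAB (by decide) (by decide) (by decide))
      cases B with
      | cons b B' =>
        simp only [List.cons_append, List.cons.injEq] at h2
        have : isA R := by
          rw [h2.1]
          exact hU _ (mem_seg (hAB ▸ List.mem_append_right A ((List.mem_cons_self (a := b) (l := B')))))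
        exact absurd this (by decide)
      | nil =>
        simp only [List.nil_append, List.cons_append, List.cons.injEq] at h2
        obtain ⟨-, h2⟩ := h2
        obtain ⟨hS2a, hS2b, hS2c, hS2d⟩ := hS2
        rw [List.append_nil] at hAB
        by_cases hmq : m = qq
        · subst hmq
          rw [seg_self, List.nil_append] at h2
          injection h2 with h2a h2b
          have hne : seg U m U.length ≠ [] := by rw [← h2b]; simp
          obtain ⟨hql1, hql2⟩ := seg_ne_nil hne
          rw [seg_cons U hql1 hql2] at h2b
          injection h2b with h2c h2d
          subst h1 h2d
          refine Or.inr (Or.inr (Or.inr (Or.inl ⟨p, m, m+1, i, A ++ [R], [ai i],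
            ?_, ?_, ?_⟩)))
          · unfold mids
            rw [show seg U m (m+1) = [u U m] by
                rw [seg_cons U (Nat.lt_succ_self m) hql2, seg_self],
              hAB, ← h2c]
            simp
          · refine ⟨hS2d, by omega, by omega, ?_, ?_, ?_⟩
            · intro h
              exact sadm_shift (sadm_diag hsf hS2d hS2c) hql2 (h.symm.trans h2c)
            · intro _ _
              exact sadm_diag hsf hS2d hS2c
            · intro _
              omega
          · simp only [w1, List.append_assoc, List.cons_append, List.singleton_append,
              List.nil_append]
        · have hmlt : m < qq := lt_of_le_of_ne hS2b hmq
          rw [seg_cons U hmlt (by omega), List.cons_append] at h2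
          injection h2 with h2a h2b
          have : isA Q := by rw [h2a]; exact u_isA hU (by omega)
          exact absurd this (by decide)
  · rintro (hl | ⟨p,c,hpc,hcn,hl⟩ | ⟨p,r,qq,A,B,hAB,hS,hl⟩ | ⟨p,r,qq,i',A,B,hAB,hT,hl⟩ |
      ⟨p,m,qq,A,B,hAB,hS2,hl⟩)
    · exact absurd (hl ▸ (by simp : ti i ∈ xl ++ [R, ti i, ai i, Q] ++ yl))
        (no_c0 hU (ti_ne i).2.2.2.2.2.2.2 (notA_ti i))
    · exact absurd (hl ▸ (by simp : ti i ∈ xl ++ [R, ti i, ai i, Q] ++ yl))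
        (no_cg hU (ti_ne i).1 (ti_ne i).2.1 (ti_ne i).2.2.2.2.1 (notA_ti i))
    · exact absurd (hl ▸ (by simp : ti i ∈ xl ++ [R, ti i, ai i, Q] ++ yl))
        (no_cs1 hU hAB (ti_ne i).1 (ti_ne i).2.1 (ti_ne i).2.2.2.2.2.1 (ti_ne i).2.2.1
          (ti_ne i).2.2.2.1 (notA_ti i))
    · by_cases hii : ti i = ti i'
      · obtain rfl : i = i' := ti_injective hii
        rw [w1_eq_tok, show xl ++ [R, ti i, ai i, Q] ++ yl =
          (xl ++ [R]) ++ ti i :: ([ai i, Q] ++ yl) by simp] at hl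
        obtain ⟨h1, h2⟩ := split_unique hl
          (tok_notin_X hU hAB (ti_ne i).1 (ti_ne i).2.1 (ti_ne i).2.2.2.1 (notA_ti i))
          (tok_notin_Y hU hAB (ti_ne i).2.2.1 (ti_ne i).2.2.2.1 (notA_ti i))
        cases B with
        | nil =>
          simp only [List.nil_append, List.cons_append, List.cons.injEq] at h2
          exact absurd h2.1 ((ai_ne i).2.2.1)
        | cons b B' =>
          simp only [List.cons_append, List.cons.injEq] at h2
          obtain ⟨hb, h2⟩ := h2
          cases B' with
          | cons b' B'' =>
            simp only [List.cons_append, List.cons.injEq] at h2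
            have hbQ : b' = Q := h2.1.symm
            subst hbQ
            rcases memB_mids hU hAB (List.mem_cons_of_mem b ((List.mem_cons_self (a := _) (l := B''))))
              with h | h
            · exact absurd h (by decide)
            · exact absurd h (by decide)
          | nil =>
            simp only [List.nil_append, List.cons_append, List.cons.injEq] at h2
            obtain ⟨-, h2⟩ := h2
            obtain ⟨hpr, hrq, hql, hc1, hc2, hc3⟩ := hT
            subst hb h2
            rcases List.eq_nil_or_concat A with rfl | ⟨A'', lastA, rfl⟩
            · rw [show M :: (seg U 0 p ++ P :: ([] : List Phi)) = (M :: seg U 0 p) ++ [P]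
                by simp] at h1
              obtain ⟨-, hRP⟩ := snoc_inj h1
              exact absurd hRP (by decide)
            · rw [List.concat_eq_append] at h1 hAB
              rw [show M :: (seg U 0 p ++ P :: (A'' ++ [lastA])) =
                (M :: (seg U 0 p ++ P :: A'')) ++ [lastA] by simp] at h1
              obtain ⟨h3, h4⟩ := snoc_inj h1
              subst h3
              rw [← h4] at hAB
              rw [show (A'' ++ [R]) ++ [ai i] = A'' ++ R :: [ai i] by simp,
                show mids U p r qq = seg U p r ++ R :: seg U r qq from rfl] at hAB
              obtain ⟨hA'', hseg2⟩ := split_unique hAB (not_mem_seg hU (by decide))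
                (not_mem_seg hU (by decide))
              have hrlt : r < qq ∧ r < U.length := by
                apply seg_ne_nil; rw [← hseg2]; simp
              rw [seg_cons U hrlt.1 hrlt.2] at hseg2
              have hseg2' := hseg2.symm
              injection hseg2' with hur htail
              have hqq : qq = r + 1 := by
                by_contra h
                have hlt : r + 1 < qq := by omega
                have hc := seg_cons U (a := r+1) (b := qq) hlt (by omega)
                rw [htail] at hc
                simp at hc
              subst hqq
              refine Or.inr (Or.inr (Or.inr (Or.inr ⟨p, r, r, A'', [],
                by rw [List.append_nil, hA''], ⟨by omega, le_rfl, by omega, hpr⟩, ?_⟩)))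
              have hseg3 : seg U r U.length = ai i :: seg U (r+1) U.length := by
                rw [seg_cons U (show r < U.length by omega) (by omega), hur]
              rw [seg_self, hseg3]
              simp only [w1, List.append_assoc, List.cons_append, List.singleton_append,
                List.nil_append]
      · exact absurd (hl ▸ (by simp : ti i ∈ xl ++ [R, ti i, ai i, Q] ++ yl))
          (no_ct hU hAB (ti_ne i).1 (ti_ne i).2.1 hii (ti_ne i).2.2.1
            (ti_ne i).2.2.2.1 (notA_ti i))
    · exact absurd (hl ▸ (by simp : ti i ∈ xl ++ [R, ti i, ai i, Q] ++ yl))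
        (no_cs2 hU hAB (ti_ne i).1 (ti_ne i).2.1 (ti_ne i).2.2.2.2.2.2.1 (ti_ne i).2.2.1
          (ti_ne i).2.2.2.1 (notA_ti i))

lemma step_good (hU : Aword U) (hsf : SqFree U) {a b : W0} (h : step a b) :
    GoodW U a ↔ GoodW U b := by
  obtain ⟨x, y, uu, vv, hr, rfl, rfl⟩ := h
  rcases W0_cases x with rfl | ⟨lx, rfl⟩
  · simp only [zero_mul]
  rcases W0_cases y with rfl | ⟨ly, rfl⟩
  · simp only [mul_zero]
  cases hr with
  | r1L x' =>
    simp only [w_mul, mul_zero, zero_mul]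
    rw [goodW_coe]
    exact iff_of_false (no_r1L hU x' lx ly) not_goodW_zero
  | r1M x' =>
    simp only [w_mul, mul_zero, zero_mul]
    rw [goodW_coe]
    exact iff_of_false (no_r1M hU x' lx ly) not_goodW_zero
  | r4 x' hx =>
    simp only [w_mul, mul_zero, zero_mul]
    rw [goodW_coe]
    exact iff_of_false (no_r4 hU x' hx lx ly) not_goodW_zero
  | r12 =>
    simp only [w_mul, mul_zero, zero_mul]
    rw [goodW_coe]
    exact iff_of_false (no_r12 hU lx ly) not_goodW_zero
  | r2 => simp only [w_mul]; rw [goodW_coe, goodW_coe]; exact iff_r2 hU lx ly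
  | r3 i => simp only [w_mul]; rw [goodW_coe, goodW_coe]; exact iff_r3 hU i lx ly
  | r5 i j => simp only [w_mul]; rw [goodW_coe, goodW_coe]; exact iff_r5 hU hsf i j lx ly
  | r6 i x' hx => simp only [w_mul]; rw [goodW_coe, goodW_coe]; exact iff_r6 hU i x' hx lx ly
  | r7 i => simp only [w_mul]; rw [goodW_coe, goodW_coe]; exact iff_r7 hU hsf i lx ly
  | r8 i j hij => simp only [w_mul]; rw [goodW_coe, goodW_coe]; exact iff_r8 hU i j hij lx ly
  | r9 i j => simp only [w_mul]; rw [goodW_coe, goodW_coe]; exact iff_r9 hU i j lx ly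
  | r10 => simp only [w_mul]; rw [goodW_coe, goodW_coe]; exact iff_r10 hU lx ly
  | r11 i => simp only [w_mul]; rw [goodW_coe, goodW_coe]; exact iff_r11 hU hsf i lx ly
  | r13 i => simp only [w_mul]; rw [goodW_coe, goodW_coe]; exact iff_r13 hU i lx ly
  | r14 i => simp only [w_mul]; rw [goodW_coe, goodW_coe]; exact iff_r14 hU hsf i lx ly

lemma eqvgen_good (hU : Aword U) (hsf : SqFree U) {a b : W0}
    (h : Relation.EqvGen step a b) : GoodW U a ↔ GoodW U b := by
  induction h with
  | rel x y hxy => exact step_good hU hsf hxy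
  | refl x => exact Iff.rfl
  | symm x y _ ih => exact ih.symm
  | trans x y z _ _ ih1 ih2 => exact ih1.trans ih2

end Closure

end Stmt12


/-- if `U` is a square-free word in `a1,a2,a3`, then `L·U ≠ 0` in `H`. -/
theorem stmt12 (U : List Phi) (hU : Aword U) (hsf : SqFree U) :
    q (w (L :: U)) ≠ q 0 := by
  intro hq
  have hcon : hCon (w (Phi.L :: U)) 0 := (Con.eq hCon).mp hq
  have hchain := Stmt12.chain_of_hCon hcon
  have hiff := Stmt12.eqvgen_good hU hsf hchain
  exact Stmt12.not_goodW_zero (hiff.mp ⟨_, Or.inl rfl, rfl⟩)
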